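/- arXiv:1612.03624 — 12 statements merged into one kernel-verified Lean document; each statement's English description precedes it below -/
import Mathlib

section
/- In any commutative automorphic Lie triple system T over a field of characteristic zero, the second axiom of Lie triple systems holds automatically: for all a, b, c, a', b' ∈ T, [a',b',[a,b,c]] = [[a',b',a],b,c] + [a,[a',b',b],c] + [a,b,[a',b',c]] (that is, the map x ↦ [a',b',x] is a derivation of the triple product). -/
/-- In any commutative automorphic Lie triple system over a field of
characteristic zero, the second axiom of Lie triple systems holds automatically. -/
theorem stmt_0 {K T : Type*} [Field K] [CharZero K] [AddCommGroup T] [Module K T]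
    (br : T →ₗ[K] T →ₗ[K] T →ₗ[K] T)
    (skew : ∀ a b c : T, br a b c = - br b a c)
    (jacobi : ∀ a b c : T, br a b c + br b c a + br c a b = 0)
    (ca : ∀ a b c a' b' : T,
      br (br a b c) a' b' = br (br a a' b') b c + br a (br b a' b') c + br a b (br c a' b'))
    (a b c a' b' : T) :
    br a' b' (br a b c)
      = br (br a' b' a) b c + br a (br a' b' b) c + br a b (br a' b' c) := by
  have key : ∀ x : T, br a' b' x = br x b' a' - br x a' b' := by
    intro x
    have h := jacobi x a' b'
    rw [skew b' x a'] at h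
    have e : br a' b' x + br x a' b' - br x b' a' = 0 := by rw [← h]; abel
    exact eq_sub_of_add_eq (sub_eq_zero.mp e)
  rw [key (br a b c), ca a b c b' a', ca a b c a' b', key a, key b, key c]
  simp only [map_sub, LinearMap.sub_apply]
  abel
end

section
/- In any commutative automorphic Lie triple system T over a field of characteristic zero, for all a, a', b, c ∈ T one has [a,a',[c,b,a']] = 2·[a,a',[c,a',b]]. -/
/-- In any commutative automorphic Lie triple system over a field of
characteristic zero, `[a,a',[c,b,a']] = 2·[a,a',[c,a',b]]`. -/
theorem stmt_1 {K T : Type*} [Field K] [CharZero K] [AddCommGroup T] [Module K T]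
    (br : T →ₗ[K] T →ₗ[K] T →ₗ[K] T)
    (skew : ∀ a b c : T, br a b c = - br b a c)
    (jacobi : ∀ a b c : T, br a b c + br b c a + br c a b = 0)
    (ca : ∀ a b c a' b' : T,
      br (br a b c) a' b' = br (br a a' b') b c + br a (br b a' b') c + br a b (br c a' b'))
    (a a' b c : T) :
    br a a' (br c b a') = (2 : K) • br a a' (br c a' b) := by
  have hzz : ∀ x y : T, br x x y = 0 := by
    intro x y
    have h := skew x x y
    have h2 : (2 : K) • br x x y = 0 := by
      rw [two_smul]
      nth_rewrite 2 [h]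
      abel
    have := smul_eq_zero.mp h2
    rcases this with h' | h'
    · exact absurd h' (by norm_num)
    · exact h'
  have h1 := ca a a' b a' c
  have h2 := ca a a' c a' b
  rw [hzz a' c] at h1
  rw [hzz a' b] at h2
  simp only [map_zero, LinearMap.zero_apply, add_zero] at h1 h2
  -- h1 : br (br a a' b) a' c = br (br a a' c) a' b + br a a' (br b a' c)
  -- h2 : br (br a a' c) a' b = br (br a a' b) a' c + br a a' (br c a' b)
  have key : br a a' (br b a' c) = - br a a' (br c a' b) := by
    rw [h2] at h1
    linear_combination (norm := module) -h1
  have hin : br c b a' = - br b a' c + br c a' b := by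
    linear_combination (norm := module) jacobi c b a' - skew a' c b
  rw [hin, map_add, map_neg, key]
  module
end

section
/- In any commutative automorphic Lie triple system T over a field of characteristic zero, for all a, a', c ∈ T one has [a,a',[c,a',a]] = 0. -/
/-- In any commutative automorphic Lie triple system over a field of
characteristic zero, `[a,a',[c,a',a]] = 0`. -/
theorem stmt_2 {K T : Type*} [Field K] [CharZero K] [AddCommGroup T] [Module K T]
    (br : T →ₗ[K] T →ₗ[K] T →ₗ[K] T)
    (skew : ∀ a b c : T, br a b c = - br b a c)
    (jacobi : ∀ a b c : T, br a b c + br b c a + br c a b = 0)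
    (ca : ∀ a b c a' b' : T,
      br (br a b c) a' b' = br (br a a' b') b c + br a (br b a' b') c + br a b (br c a' b'))
    (a a' c : T) :
    br a a' (br c a' a) = 0 := by
  -- br x x y = 0
  have hsq : ∀ x y : T, br x x y = 0 := by
    intro x y
    have h := skew x x y
    have h2 : (2 : K) • br x x y = 0 := by
      rw [two_smul]
      nth_rewrite 1 [h]
      exact neg_add_cancel _
    rcases smul_eq_zero.mp h2 with h3 | h3
    · exact absurd h3 (by norm_num)
    · exact h3
  -- (2): br (br a a' c) a' a = br (br a a' a) a' c + br a a' (br c a' a)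
  have h2 : br (br a a' c) a' a
      = br (br a a' a) a' c + br a a' (br c a' a) := by
    have := ca a a' c a' a
    rw [hsq a' a] at this
    simpa using this
  -- (3): br (br a a' a) a' c = br (br a a' c) a' a + br a a' (br a a' c)
  have h3 : br (br a a' a) a' c
      = br (br a a' c) a' a + br a a' (br a a' c) := by
    have := ca a a' a a' c
    rw [hsq a' c] at this
    simpa using this
  -- (B): goal = - br a a' (br a a' c)
  have hB : br a a' (br c a' a) = - br a a' (br a a' c) := by
    rw [h3] at h2
    -- h2 : br (br a a' c) a' a = br (br a a' c) a' a + br a a' (br a a' c) + br a a' (br c a' a)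
    have hXG : br a a' (br a a' c) + br a a' (br c a' a) = 0 := by
      have hh : br (br a a' c) a' a + 0
          = br (br a a' c) a' a + (br a a' (br a a' c) + br a a' (br c a' a)) := by
        rw [add_zero]
        conv_lhs => rw [h2]
        abel
      exact (add_left_cancel hh).symm
    exact eq_neg_of_add_eq_zero_right hXG
  -- swapped version (a ↔ a')
  have h2' : br (br a' a c) a a'
      = br (br a' a a') a c + br a' a (br c a a') := by
    have := ca a' a c a a'
    rw [hsq a a'] at this
    simpa using this
  have h3' : br (br a' a a') a c
      = br (br a' a c) a a' + br a' a (br a' a c) := by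
    have := ca a' a a' a c
    rw [hsq a c] at this
    simpa using this
  have hB' : br a' a (br c a a') = - br a' a (br a' a c) := by
    rw [h3'] at h2'
    have hXG : br a' a (br a' a c) + br a' a (br c a a') = 0 := by
      have hh : br (br a' a c) a a' + 0
          = br (br a' a c) a a' + (br a' a (br a' a c) + br a' a (br c a a')) := by
        rw [add_zero]
        conv_lhs => rw [h2']
        abel
      exact (add_left_cancel hh).symm
    exact eq_neg_of_add_eq_zero_right hXG
  -- rewrite hB' in terms of br a a'
  have hB'2 : br a a' (br c a a') = br a a' (br a a' c) := by
    have e1 : br a' a (br c a a') = - br a a' (br c a a') := by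
      rw [skew a' a]
    have e2 : br a' a (br a' a c) = br a a' (br a a' c) := by
      rw [skew a' a c, map_neg, skew a' a]
      simp
    rw [e1, e2] at hB'
    have := neg_injective hB'
    exact this
  -- Jacobi: br c a' a = br a a' c + br c a a'
  have hJ : br c a' a = br a a' c + br c a a' := by
    have h := jacobi c a' a
    rw [skew a' a c, skew a c a'] at h
    have : br c a' a - (br a a' c + br c a a') = 0 := by
      rw [← h]; abel
    exact sub_eq_zero.mp this
  -- goal = 2 • br a a' (br a a' c)
  have hA : br a a' (br c a' a)
      = br a a' (br a a' c) + br a a' (br a a' c) := by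
    rw [hJ, map_add, hB'2]
  set x := br a a' (br a a' c) with hx
  have hneg : -x = x + x := by rw [← hB, hA]
  have h30 : x + x + x = 0 := by
    calc x + x + x = x + (x + x) := by abel
    _ = x + -x := by rw [← hneg]
    _ = 0 := add_neg_cancel x
  have h3K : (3 : K) • x = 0 := by
    have e : ((3 : K)) • x = x + x + x := by
      rw [show ((3:K)) = (1:K)+1+1 by norm_num, add_smul, add_smul, one_smul]
    rw [e, h30]
  have hx0 : x = 0 := by
    rcases smul_eq_zero.mp h3K with h | h
    · exact absurd h (by norm_num)
    · exact h
  rw [hB, hx0, neg_zero]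
end

section
/- Let T be a commutative automorphic Lie triple system over a field of characteristic zero and fix a' ∈ T. Then the trilinear map (a,b,c) ↦ [a,a',[b,a',c]] is skew-symmetric in a, b, c; that is, for all a, b, c ∈ T: [a,a',[b,a',c]] = −[b,a',[a,a',c]], [a,a',[b,a',c]] = −[a,a',[c,a',b]], and [a,a',[b,a',c]] = −[c,a',[b,a',a]]. -/
set_option maxHeartbeats 2000000 in
theorem aux_h1 {K T : Type*} [Field K] [CharZero K] [AddCommGroup T] [Module K T]
    (f : T → T → T → T)
    (hs : ∀ a b c : T, f a b c = - f b a c)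
    (hj : ∀ a b c : T, f a b c + f b c a + f c a b = 0)
    (hca : ∀ a b c a' b' : T,
      f (f a b c) a' b' = f (f a a' b') b c + f a (f b a' b') c + f a b (f c a' b'))
    (a' a b c : T) :
    f a a' (f b a' c) = - f b a' (f a a' c) := by
  linear_combination (norm := module)
      (1/3 : K) • hs a b (f c a' a') +
      (1/3 : K) • hj a b (f c a' a') +
      (2/3 : K) • hs a b (f a' a' c) +
      (1/6 : K) • hs a c (f b a' a') +
      (-1/6 : K) • hs a c (f a' b a') +
      (1/2 : K) • hs a c (f a' a' b) +
      (1/6 : K) • hs a a' (f b c a') +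
      (1 : K) • hs a a' (f b a' c) +
      (-1/3 : K) • hs a a' (f c b a') +
      (-2/3 : K) • hj a a' (f c b a') +
      (1/2 : K) • hs a a' (f c a' b) +
      (1/3 : K) • hj a a' (f c a' b) +
      (-1/6 : K) • hs a a' (f a' b c) +
      (1/3 : K) • hs a a' (f a' c b) +
      (1/2 : K) • hs a (f b c a') a' +
      (-1/2 : K) • hj a (f b c a') a' +
      (3/2 : K) • hs a (f b a' c) a' +
      (-5/6 : K) • hj a (f b a' c) a' +
      (2/3 : K) • hs a (f b a' a') c +
      (1/2 : K) • hs a (f c b a') a' +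
      (-2/3 : K) • hj a (f c b a') a' +
      (1/2 : K) • hs a (f c a' b) a' +
      (1/6 : K) • hj a (f c a' a') b +
      (1/2 : K) • hs a (f a' b c) a' +
      (-2/3 : K) • hj a (f a' b c) a' +
      (-1/3 : K) • hs a (f a' b a') c +
      (-2/3 : K) • hj a (f a' b a') c +
      (1/2 : K) • hs a (f a' c b) a' +
      (-1/6 : K) • hj a (f a' c b) a' +
      (1/6 : K) • hj a (f a' c a') b +
      (2/3 : K) • hs a (f a' a' b) c +
      (1/6 : K) • hj a (f a' a' b) c +
      (1/6 : K) • hs b c (f a a' a') +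
      (1/6 : K) • hj b c (f a a' a') +
      (-1/6 : K) • hs b c (f a' a a') +
      (-1/6 : K) • hj b c (f a' a a') +
      (1/2 : K) • hs b c (f a' a' a) +
      (1/3 : K) • hs b a' (f a c a') +
      (-1/3 : K) • hj b a' (f a c a') +
      (5/6 : K) • hs b a' (f a a' c) +
      (1/6 : K) • hj b a' (f a a' c) +
      (-1/2 : K) • hs b a' (f c a a') +
      (-1/3 : K) • hj b a' (f c a a') +
      (2/3 : K) • hs b a' (f c a' a) +
      (1/6 : K) • hj b a' (f c a' a) +
      (-1/6 : K) • hj b a' (f a' a c) +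
      (1/6 : K) • hs b a' (f a' c a) +
      (1/6 : K) • hj b a' (f a' c a) +
      (1/2 : K) • hs b (f a c a') a' +
      (-1/3 : K) • hj b (f a c a') a' +
      (3/2 : K) • hs b (f a a' c) a' +
      (-5/6 : K) • hj b (f a a' c) a' +
      (2/3 : K) • hs b (f a a' a') c +
      (-1/6 : K) • hj b (f a a' a') c +
      (1/2 : K) • hs b (f c a a') a' +
      (-5/6 : K) • hj b (f c a a') a' +
      (1/2 : K) • hs b (f c a' a) a' +
      (1/2 : K) • hs b (f a' a c) a' +
      (-2/3 : K) • hj b (f a' a c) a' +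
      (-1/3 : K) • hs b (f a' a a') c +
      (-1/2 : K) • hj b (f a' a a') c +
      (1/2 : K) • hs b (f a' c a) a' +
      (-1/6 : K) • hj b (f a' c a) a' +
      (2/3 : K) • hs b (f a' a' a) c +
      (1/6 : K) • hj b (f a' a' a) c +
      (1 : K) • hs c a' (f a b a') +
      (-1 : K) • hj c a' (f a b a') +
      (-1/2 : K) • hs c a' (f a a' b) +
      (1/2 : K) • hj c a' (f a a' b) +
      (-1/3 : K) • hs c a' (f b a a') +
      (1/6 : K) • hj c a' (f b a a') +
      (-2/3 : K) • hs c a' (f b a' a) +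
      (2/3 : K) • hj c a' (f b a' a) +
      (-1/3 : K) • hs c a' (f a' a b) +
      (1/6 : K) • hj c a' (f a' a b) +
      (-1/6 : K) • hs c a' (f a' b a) +
      (5/6 : K) • hs c (f a b a') a' +
      (-5/3 : K) • hj c (f a b a') a' +
      (-1/6 : K) • hs c (f a a' b) a' +
      (5/6 : K) • hj c (f a a' b) a' +
      (-2/3 : K) • hs c (f b a a') a' +
      (-1/6 : K) • hs c (f b a' a) a' +
      (5/6 : K) • hj c (f b a' a) a' +
      (-1/6 : K) • hs c (f a' a b) a' +
      (-1/6 : K) • hs c (f a' b a) a' +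
      (5/12 : K) • hs a' a' (f a b c) +
      (-5/6 : K) • hj a' a' (f a b c) +
      (-1/12 : K) • hs a' a' (f a c b) +
      (1/6 : K) • hj a' a' (f a c b) +
      (1/4 : K) • hs a' a' (f b a c) +
      (-2/3 : K) • hj a' a' (f b a c) +
      (1/12 : K) • hs a' a' (f b c a) +
      (1/4 : K) • hs a' a' (f c a b) +
      (-1/3 : K) • hj a' a' (f c a b) +
      (1/12 : K) • hs a' a' (f c b a) +
      (-1/6 : K) • hj a' a' (f c b a) +
      (-3/2 : K) • hs a' (f b a a') c +
      (2/3 : K) • hca a b c a' a' +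
      (2/3 : K) • hca a b a' a' c +
      (1/6 : K) • hca a c b a' a' +
      (-1/6 : K) • hca a c a' b a' +
      (1/2 : K) • hca a c a' a' b +
      (1/6 : K) • hca a a' b c a' +
      (-1 : K) • hca a a' c b a' +
      (5/6 : K) • hca a a' c a' b +
      (-1/6 : K) • hca a a' a' b c +
      (1/3 : K) • hca a a' a' c b +
      (1/2 : K) • hca b a c a' a' +
      (1/6 : K) • hca b a a' c a' +
      (2/3 : K) • hca b a a' a' c +
      (1/3 : K) • hca b c a a' a' +
      (-1/3 : K) • hca b c a' a a' +
      (1/2 : K) • hca b c a' a' a +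
      (-5/6 : K) • hca b a' c a a' +
      (5/6 : K) • hca b a' c a' a +
      (-1/6 : K) • hca b a' a' a c +
      (1/3 : K) • hca b a' a' c a +
      (1/6 : K) • hca c a b a' a' +
      (-5/6 : K) • hca c a a' b a' +
      (2/3 : K) • hca c a a' a' b +
      (-2/3 : K) • hca c b a' a a' +
      (2/3 : K) • hca c b a' a' a +
      (-1/6 : K) • hca c a' b a a' +
      (-1/6 : K) • hca c a' a' a b +
      (-1/6 : K) • hca c a' a' b a +
      (-1/3 : K) • hca a' a b c a' +
      (1/6 : K) • hca a' a b a' c +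
      (-1 : K) • hca a' a c b a' +
      (1/2 : K) • hca a' a c a' b +
      (-5/6 : K) • hca a' a a' b c +
      (1/6 : K) • hca a' a a' c b +
      (-4/3 : K) • hca a' b c a a' +
      (2/3 : K) • hca a' b c a' a +
      (-2/3 : K) • hca a' b a' a c +
      (-2/3 : K) • hca a' c a b a' +
      (1/3 : K) • hca a' c a a' b +
      (-1/3 : K) • hca a' c b a a' +
      (1/6 : K) • hca a' c b a' a +
      (-1/3 : K) • hca a' c a' a b +
      (-1/6 : K) • hca a' c a' b a +
      (-1/6 : K) • hca a' a' b a c +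
      (1/6 : K) • hca a' a' b c a +
      (1/6 : K) • hca a' a' c a b

set_option maxHeartbeats 2000000 in
theorem aux_h2 {K T : Type*} [Field K] [CharZero K] [AddCommGroup T] [Module K T]
    (f : T → T → T → T)
    (hs : ∀ a b c : T, f a b c = - f b a c)
    (hj : ∀ a b c : T, f a b c + f b c a + f c a b = 0)
    (hca : ∀ a b c a' b' : T,
      f (f a b c) a' b' = f (f a a' b') b c + f a (f b a' b') c + f a b (f c a' b'))
    (a' a b c : T) :
    f a a' (f b a' c) = - f a a' (f c a' b) := by
  linear_combination (norm := module)
      (-1 : K) • hs a (f a' a' b) c +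
      (-1 : K) • hs a (f a' a' c) b +
      (-1 : K) • hs b a' (f a' a c) +
      (1 : K) • hj b a' (f a' a c) +
      (-1 : K) • hs b (f a' a c) a' +
      (1 : K) • hj b (f a' a c) a' +
      (-1 : K) • hs c a' (f a' a b) +
      (1 : K) • hj c a' (f a' a b) +
      (-1 : K) • hs c (f a' a b) a' +
      (1 : K) • hj c (f a' a b) a' +
      (1/2 : K) • hs a' a' (f b a c) +
      (1/2 : K) • hs a' a' (f c a b) +
      (-1 : K) • hca a a' b a' c +
      (-1 : K) • hca a a' c a' b +
      (1 : K) • hca a' a' b a c +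
      (1 : K) • hca a' a' c a b

/-- In any commutative automorphic Lie triple system over a field of
characteristic zero, the map `(a,b,c) ↦ [a,a',[b,a',c]]` is skew-symmetric in `a,b,c`. -/
theorem stmt_3 {K T : Type*} [Field K] [CharZero K] [AddCommGroup T] [Module K T]
    (br : T →ₗ[K] T →ₗ[K] T →ₗ[K] T)
    (skew : ∀ a b c : T, br a b c = - br b a c)
    (jacobi : ∀ a b c : T, br a b c + br b c a + br c a b = 0)
    (ca : ∀ a b c a' b' : T,
      br (br a b c) a' b' = br (br a a' b') b c + br a (br b a' b') c + br a b (br c a' b'))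
    (a' a b c : T) :
    br a a' (br b a' c) = - br b a' (br a a' c) ∧
    br a a' (br b a' c) = - br a a' (br c a' b) ∧
    br a a' (br b a' c) = - br c a' (br b a' a) := by
  set f : T → T → T → T := fun x y z => br x y z with hf
  have h1 : ∀ a b c : T, f a a' (f b a' c) = - f b a' (f a a' c) :=
    fun a b c => aux_h1 (K := K) f skew jacobi ca a' a b c
  have h2 : ∀ a b c : T, f a a' (f b a' c) = - f a a' (f c a' b) :=
    fun a b c => aux_h2 (K := K) f skew jacobi ca a' a b c
  refine ⟨h1 a b c, h2 a b c, ?_⟩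
  show f a a' (f b a' c) = - f c a' (f b a' a)
  rw [h1 a b c, h2 b a c, h1 b c a]
  abel
end

section
/- Let T be a commutative automorphic Lie triple system over a field of characteristic zero, let a' ∈ T, and let R := R_{a',a'} : T → T, x ↦ [x,a',a']. Then for every n ≥ 1 the n-th iterate Rⁿ is a derivation of T: for all a, b, c ∈ T, Rⁿ([a,b,c]) = [Rⁿ(a),b,c] + [a,Rⁿ(b),c] + [a,b,Rⁿ(c)]. -/
/-- For `R : x ↦ [x,a',a']`, every iterate `Rⁿ` (`n ≥ 1`) is a derivation of a
commutative automorphic Lie triple system over a field of characteristic zero. -/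
theorem stmt_5 {K T : Type*} [Field K] [CharZero K] [AddCommGroup T] [Module K T]
    (br : T →ₗ[K] T →ₗ[K] T →ₗ[K] T)
    (skew : ∀ a b c : T, br a b c = - br b a c)
    (jacobi : ∀ a b c : T, br a b c + br b c a + br c a b = 0)
    (ca : ∀ a b c a' b' : T,
      br (br a b c) a' b' = br (br a a' b') b c + br a (br b a' b') c + br a b (br c a' b'))
    (a' : T) (R : T → T) (hR : ∀ x : T, R x = br x a' a') :
    ∀ n : ℕ, 1 ≤ n → ∀ a b c : T,
      R^[n] (br a b c) = br (R^[n] a) b c + br a (R^[n] b) c + br a b (R^[n] c) := by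
  -- `br a' a' x = 0` for all `x`
  have hz : ∀ x : T, br a' a' x = 0 := by
    intro x
    have h : (2 : K) • br a' a' x = 0 := by
      rw [two_smul]
      nth_rewrite 2 [skew a' a' x]
      abel
    rcases smul_eq_zero.mp h with h3 | h3
    · exact absurd h3 two_ne_zero
    · exact h3
  -- `D a' = 0`
  have hDu : br a' a' a' = 0 := hz a'
  -- `D` is a derivation
  have der : ∀ x y z : T, br (br x y z) a' a' =
      br (br x a' a') y z + br x (br y a' a') z + br x y (br z a' a') := by
    intro x y z; exact ca x y z a' a'
  -- E1 : `[Dx, a', y] = D [x, a', y]`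
  have E1 : ∀ x y : T, br (br x a' a') a' y = br (br x a' y) a' a' := by
    intro x y
    have h := ca x a' a' a' y
    rw [hz y] at h
    simpa using h
  -- K1 : `[x, a', Dy] = 0`
  have K1 : ∀ x y : T, br x a' (br y a' a') = 0 := by
    intro x y
    have h := der x a' y
    rw [E1 x y, hDu] at h
    simp only [map_zero, LinearMap.zero_apply, add_zero, zero_add] at h
    exact (left_eq_add.mp h)
  -- E2 : `[Dx, y, a'] = D [x, y, a'] - [x, Dy, a']`
  have E2 : ∀ x y : T, br (br x a' a') y a' =
      br (br x y a') a' a' - br x (br y a' a') a' := by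
    intro x y
    have h := ca x a' a' y a'
    rw [skew a' y a'] at h
    simp only [map_neg, LinearMap.neg_apply, K1, neg_zero, add_zero] at h
    rw [h]; abel
  -- K2 : `[x, Dy, a'] = - D [y, a', x]`
  have K2 : ∀ x y : T, br x (br y a' a') a' = - br (br y a' x) a' a' := by
    intro x y
    have h := jacobi x (br y a' a') a'
    rw [E1 y x, skew a' x (br y a' a'), K1 x y, neg_zero, add_zero] at h
    exact eq_neg_of_add_eq_zero_left h
  -- Z3 : `[x, Dp, Dz] = 0`
  have Z3 : ∀ x p z : T, br x (br p a' a') (br z a' a') = 0 := by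
    intro x p z
    have h := ca x a' (br z a' a') p a'
    rw [K1 x z, K1 (br x p a') z, skew a' p a', E2 z p, K2 z p] at h
    simp only [map_zero, LinearMap.zero_apply, map_neg, LinearMap.neg_apply, map_sub,
      LinearMap.sub_apply, sub_neg_eq_add, map_add, LinearMap.add_apply, K1,
      neg_zero, add_zero, zero_add, neg_eq_zero] at h
    exact neg_eq_zero.mp h.symm
  -- Z2 : `[Dp, x, Dz] = 0`
  have Z2 : ∀ p x z : T, br (br p a' a') x (br z a' a') = 0 := by
    intro p x z
    rw [skew (br p a' a') x (br z a' a'), Z3 x p z, neg_zero]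
  -- Z1 : `[Dx, Dy, z] = 0`
  have Z1 : ∀ x y z : T, br (br x a' a') (br y a' a') z = 0 := by
    intro x y z
    have h := jacobi (br x a' a') (br y a' a') z
    rw [Z2 y z x, Z3 z x y, add_zero, add_zero] at h
    exact h
  -- main induction
  intro n hn
  obtain ⟨m, rfl⟩ : ∃ m, n = m + 1 := ⟨n - 1, by omega⟩
  clear hn
  induction m with
  | zero =>
    intro a b c
    simp only [zero_add, Function.iterate_one, hR]
    exact der a b c
  | succ k ih =>
    intro a b c
    have hstep : ∀ x : T, R^[k + 1 + 1] x = br (R^[k + 1] x) a' a' := by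
      intro x; rw [Function.iterate_succ_apply', hR]
    have hstep' : ∀ x : T, R^[k + 1] x = br (R^[k] x) a' a' := by
      intro x; rw [Function.iterate_succ_apply', hR]
    rw [hstep (br a b c), ih a b c]
    simp only [map_add, LinearMap.add_apply]
    rw [der (R^[k+1] a) b c, der a (R^[k+1] b) c, der a b (R^[k+1] c)]
    rw [hstep' a, hstep' b, hstep' c]
    rw [Z1 (R^[k] a) b c, Z2 (R^[k] a) b c, Z1 a (R^[k] b) c, Z3 a (R^[k] b) c,
      Z2 a b (R^[k] c), Z3 a b (R^[k] c)]
    rw [hstep a, hstep b, hstep c, hstep' a, hstep' b, hstep' c]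
    abel
end

section
/- In any commutative automorphic Lie triple system T over a field of characteristic zero, the operators R_{a',b'} and R_{a',a'} commute: for all a, a', b' ∈ T, [[a,a',b'],a',a'] = [[a,a',a'],a',b']. -/
/-- In any commutative automorphic Lie triple system over a field of
characteristic zero, the operators `R_{a',b'}` and `R_{a',a'}` commute. -/
theorem stmt_6 {K T : Type*} [Field K] [CharZero K] [AddCommGroup T] [Module K T]
    (br : T →ₗ[K] T →ₗ[K] T →ₗ[K] T)
    (skew : ∀ a b c : T, br a b c = - br b a c)
    (jacobi : ∀ a b c : T, br a b c + br b c a + br c a b = 0)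
    (ca : ∀ a b c a' b' : T,
      br (br a b c) a' b' = br (br a a' b') b c + br a (br b a' b') c + br a b (br c a' b'))
    (a a' b' : T) :
    br (br a a' b') a' a' = br (br a a' a') a' b' := by
  have h0 : ∀ c : T, br a' a' c = 0 := by
    intro c
    have h := skew a' a' c
    have h2 : (2 : K) • br a' a' c = 0 := by
      rw [two_smul]
      linear_combination (norm := abel) h
    have h2ne : (2 : K) ≠ 0 := two_ne_zero
    simpa [smul_eq_zero, h2ne] using h2
  have h := ca a a' a' a' b'
  rw [h0 b'] at h
  simp only [map_zero, LinearMap.zero_apply, add_zero] at h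
  exact h.symm
end

section
/- In any commutative automorphic Lie triple system T over a field of characteristic zero, for all a, a', b' ∈ T one has [[a,a',a'],b',a'] = [[a,a',b'],a',a'] (that is, R_{b',a'} ∘ R_{a',a'} = R_{a',a'} ∘ R_{a',b'}). -/
/-- In any commutative automorphic Lie triple system over a field of
characteristic zero, `R_{b',a'} ∘ R_{a',a'} = R_{a',a'} ∘ R_{a',b'}`. -/
theorem stmt_7 {K T : Type*} [Field K] [CharZero K] [AddCommGroup T] [Module K T]
    (br : T →ₗ[K] T →ₗ[K] T →ₗ[K] T)
    (skew : ∀ a b c : T, br a b c = - br b a c)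
    (jacobi : ∀ a b c : T, br a b c + br b c a + br c a b = 0)
    (ca : ∀ a b c a' b' : T,
      br (br a b c) a' b' = br (br a a' b') b c + br a (br b a' b') c + br a b (br c a' b'))
    (a a' b' : T) :
    br (br a a' a') b' a' = br (br a a' b') a' a' := by
  -- br x x z = 0
  have h0 : ∀ x z : T, br x x z = 0 := by
    intro x z
    have h := skew x x z
    have h2 : (2 : K) • br x x z = 0 := by
      rw [two_smul]; nth_rewrite 1 [h]; abel
    have := smul_eq_zero.mp h2
    rcases this with h3 | h3
    · exact absurd h3 (by norm_num)
    · exact h3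
  -- key identity : br x y (br z y y) = 0
  have key : ∀ x y z : T, br x y (br z y y) = 0 := by
    intro x y z
    have e3 := ca x y y y z
    have e2 := ca x y z y y
    rw [h0 y z] at e3
    rw [h0 y y] at e2
    simp only [map_zero, LinearMap.zero_apply, add_zero, zero_add] at e3 e2
    -- e3 : br (br x y y) y z = br (br x y z) y y + br x y (br y y z)?? check below
    rw [e3] at e2
    -- e2 : br (br x y z) y y = br (br x y z) y y + br x y (br z y y)
    have := congrArg (fun t => t - br (br x y z) y y) e2
    simpa using this.symm
  have key2 : ∀ x y z : T, br y z (br x y y) = 0 := by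
    intro x y z
    rw [skew y z (br x y y), key z y x, neg_zero]
  set w := br b' a' a' with hw
  have hu : br a' b' a' = -w := skew a' b' a'
  -- z1 : br a a' (br a' b' a') = 0
  have z1 : br a a' (br a' b' a') = 0 := by
    rw [hu, map_neg, key a a' b', neg_zero]
  -- br a w a' = br a' w a
  have z2 : br a w a' = br a' w a := by
    have hj := jacobi w a a'
    have hk : br a a' w = 0 := key a a' b'
    rw [hk] at hj
    have hs : br a w a' = - br w a a' := skew a w a'
    rw [hs]
    -- hj : br w a a' + 0 + br a' w a = 0
    have : br w a a' = - br a' w a := by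
      have := hj
      abel_nf at this ⊢
      linear_combination (norm := abel) this
    rw [this, neg_neg]
  -- E4 : br (br a' b' a) a' a' = br a' w a
  have e4 : br (br a' b' a) a' a' = br a' w a := by
    have h := ca a' b' a a' a'
    rw [h0 a' a'] at h
    simp only [map_zero, LinearMap.zero_apply, zero_add] at h
    rw [key2 a a' b'] at h
    simpa using h
  -- step1 : br a a' b' = br a b' a' - br a' b' a
  have step1 : br a a' b' = br a b' a' - br a' b' a := by
    have hj := jacobi a a' b'
    rw [skew b' a a'] at hj
    -- hj : br a a' b' + br a' b' a + -br a b' a' = 0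
    linear_combination (norm := abel) hj
  -- expand RHS of goal
  rw [step1, map_sub, LinearMap.sub_apply, LinearMap.sub_apply, e4]
  -- expand LHS via ca
  rw [ca a a' a' b' a', z1, add_zero]
  -- remaining : br (br a b' a') a' a' + br a (br a' b' a') a' = br (br a b' a') a' a' - br a' w a
  rw [hu, map_neg, LinearMap.neg_apply, z2]
  abel
end

section
/- In the algebra 𝔸, for every x ∈ 𝔸 and all y, z in the K-linear span of {a, b} one has c·x·y·z = c·x·z·y (in particular c·a·b = c·b·a), where c := a·b − b·a. Consequently, for any word w in a and b, the product c·w depends only on the number of a's and b's occurring in w. -/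
noncomputable section

/-- The first generator of the free algebra on two generators. -/
def Agen (K : Type*) [Field K] : FreeAlgebra K (Fin 2) := FreeAlgebra.ι K 0

/-- The second generator of the free algebra on two generators. -/
def Bgen (K : Type*) [Field K] : FreeAlgebra K (Fin 2) := FreeAlgebra.ι K 1

/-- The relations `a·a·b = a·b·a` and `b·b·a = b·a·b`. -/
inductive ARel (K : Type*) [Field K] :
    FreeAlgebra K (Fin 2) → FreeAlgebra K (Fin 2) → Prop
  | aab : ARel K (Agen K * Agen K * Bgen K) (Agen K * Bgen K * Agen K)
  | bba : ARel K (Bgen K * Bgen K * Agen K) (Bgen K * Agen K * Bgen K)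

/-- The algebra `𝔸`: the quotient of the free unital associative `K`-algebra on two
generators `a`, `b` by the two-sided ideal generated by `a·a·b − a·b·a` and
`b·b·a − b·a·b`. -/
abbrev AAlg (K : Type*) [Field K] := RingQuot (ARel K)

/-- The image of the generator `a` in `𝔸`. -/
def aA (K : Type*) [Field K] : AAlg K := RingQuot.mkAlgHom K (ARel K) (Agen K)

/-- The image of the generator `b` in `𝔸`. -/
def bA (K : Type*) [Field K] : AAlg K := RingQuot.mkAlgHom K (ARel K) (Bgen K)

/-- The commutator `c := a·b − b·a` in `𝔸`. -/
def cA (K : Type*) [Field K] : AAlg K := aA K * bA K - bA K * aA K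

/-- The product in `𝔸` of the word `w` in the letters `a` (for `0`) and `b` (for `1`). -/
def wordProd (K : Type*) [Field K] (w : List (Fin 2)) : AAlg K :=
  (w.map fun s => if s = 0 then aA K else bA K).prod

section Aux

variable (K : Type*) [Field K]

/-- The counit sending both generators to `0`. -/
def epsA : AAlg K →ₐ[K] K :=
  RingQuot.liftAlgHom K ⟨FreeAlgebra.lift K (fun _ => (0 : K)), by
    rintro _ _ ⟨⟩ <;> simp [Agen, Bgen]⟩

lemma epsA_a : epsA K (aA K) = 0 := by
  simp [epsA, aA, Agen, RingQuot.liftAlgHom_mkAlgHom_apply]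

lemma epsA_b : epsA K (bA K) = 0 := by
  simp [epsA, bA, Bgen, RingQuot.liftAlgHom_mkAlgHom_apply]

lemma aA_mul_cA : aA K * cA K = 0 := by
  have h := RingQuot.mkAlgHom_rel K (ARel.aab (K := K))
  simp only [map_mul] at h
  simp only [cA, mul_sub, ← mul_assoc, aA, bA]
  rw [h, sub_self]

lemma bA_mul_cA : bA K * cA K = 0 := by
  have h := RingQuot.mkAlgHom_rel K (ARel.bba (K := K))
  simp only [map_mul] at h
  simp only [cA, mul_sub, ← mul_assoc, aA, bA]
  rw [← h, sub_self]

lemma mul_cA (x : AAlg K) : x * cA K = epsA K x • cA K := by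
  obtain ⟨f, rfl⟩ := RingQuot.mkAlgHom_surjective K (ARel K) x
  induction f using FreeAlgebra.induction with
  | grade0 r =>
      simp [Algebra.smul_def]
  | grade1 i =>
      have hi : i = 0 ∨ i = 1 := by
        rcases i with ⟨(_ | _ | k), hk⟩
        · exact Or.inl rfl
        · exact Or.inr rfl
        · omega
      rcases hi with rfl | rfl
      · rw [show RingQuot.mkAlgHom K (ARel K) (FreeAlgebra.ι K (0 : Fin 2)) = aA K from rfl,
          aA_mul_cA, epsA_a, zero_smul]
      · rw [show RingQuot.mkAlgHom K (ARel K) (FreeAlgebra.ι K (1 : Fin 2)) = bA K from rfl,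
          bA_mul_cA, epsA_b, zero_smul]
  | add x y hx hy =>
      simp only [map_add, add_mul, hx, hy, add_smul]
  | mul x y hx hy =>
      simp only [map_mul, mul_assoc, hy, mul_smul_comm, hx, smul_smul, mul_comm]

lemma cA_mul_cA : cA K * cA K = 0 := by
  rw [mul_cA]
  simp [cA, epsA_a, epsA_b]

lemma cxc (x : AAlg K) : cA K * x * cA K = 0 := by
  rw [mul_assoc, mul_cA, mul_smul_comm, cA_mul_cA, smul_zero]

lemma swap (x : AAlg K) : cA K * x * bA K * aA K = cA K * x * aA K * bA K := by
  have h := cxc K x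
  have h2 : cA K * x * cA K = cA K * x * aA K * bA K - cA K * x * bA K * aA K := by
    unfold cA
    simp only [mul_sub, sub_mul, ← mul_assoc]
  rw [h2, sub_eq_zero] at h
  exact h.symm

lemma pow_swap (m : ℕ) (x : AAlg K) :
    cA K * x * bA K ^ m * aA K = cA K * x * aA K * bA K ^ m := by
  induction m generalizing x with
  | zero => simp
  | succ n ih =>
      calc cA K * x * bA K ^ (n + 1) * aA K
          = cA K * (x * bA K) * bA K ^ n * aA K := by rw [pow_succ']; simp [mul_assoc]
        _ = cA K * (x * bA K) * aA K * bA K ^ n := ih (x * bA K)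
        _ = (cA K * x * bA K * aA K) * bA K ^ n := by simp [mul_assoc]
        _ = (cA K * x * aA K * bA K) * bA K ^ n := by rw [swap]
        _ = cA K * x * aA K * bA K ^ (n + 1) := by rw [pow_succ']; simp [mul_assoc]

lemma word_normal (w : List (Fin 2)) : ∀ (n m : ℕ),
    cA K * aA K ^ n * bA K ^ m * wordProd K w =
      cA K * aA K ^ (n + w.count 0) * bA K ^ (m + w.count 1) := by
  induction w with
  | nil => intro n m; simp [wordProd]
  | cons s t ih =>
      intro n m
      have hs : s = 0 ∨ s = 1 := by
        rcases s with ⟨(_ | _ | k), hk⟩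
        · exact Or.inl rfl
        · exact Or.inr rfl
        · omega
      rcases hs with rfl | rfl
      · have hw : wordProd K ((0 : Fin 2) :: t) = aA K * wordProd K t := by
          simp [wordProd]
        rw [hw]
        calc cA K * aA K ^ n * bA K ^ m * (aA K * wordProd K t)
            = cA K * aA K ^ n * bA K ^ m * aA K * wordProd K t :=
              (mul_assoc _ (aA K) (wordProd K t)).symm
          _ = cA K * aA K ^ n * aA K * bA K ^ m * wordProd K t := by rw [pow_swap]
          _ = cA K * aA K ^ (n + 1) * bA K ^ m * wordProd K t := by
              rw [mul_assoc (cA K), ← pow_succ]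
          _ = cA K * aA K ^ (n + 1 + t.count 0) * bA K ^ (m + t.count 1) := ih (n + 1) m
          _ = cA K * aA K ^ (n + ((0 : Fin 2) :: t).count 0) *
                bA K ^ (m + ((0 : Fin 2) :: t).count 1) := by
              simp [List.count_cons]
              ring_nf
      · have hw : wordProd K ((1 : Fin 2) :: t) = bA K * wordProd K t := by
          simp [wordProd]
        rw [hw]
        calc cA K * aA K ^ n * bA K ^ m * (bA K * wordProd K t)
            = cA K * aA K ^ n * (bA K ^ m * bA K) * wordProd K t := by simp [mul_assoc]
          _ = cA K * aA K ^ n * bA K ^ (m + 1) * wordProd K t := by rw [← pow_succ]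
          _ = cA K * aA K ^ (n + t.count 0) * bA K ^ (m + 1 + t.count 1) := ih n (m + 1)
          _ = cA K * aA K ^ (n + ((1 : Fin 2) :: t).count 0) *
                bA K ^ (m + ((1 : Fin 2) :: t).count 1) := by
              simp [List.count_cons]
              ring_nf

lemma c_word (w : List (Fin 2)) :
    cA K * wordProd K w = cA K * aA K ^ (w.count 0) * bA K ^ (w.count 1) := by
  have h := word_normal K w 0 0
  simpa using h

end Aux

/-- In `𝔸`, `c·x·y·z = c·x·z·y` for every `x ∈ 𝔸` and all `y, z` in the span of
`{a, b}` (in particular `c·a·b = c·b·a`); consequently `c·w` only depends on the number of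
`a`'s and `b`'s occurring in the word `w`. -/
theorem stmt_11 (K : Type*) [Field K] [CharZero K] :
    (∀ x : AAlg K, ∀ y ∈ Submodule.span K {aA K, bA K},
      ∀ z ∈ Submodule.span K {aA K, bA K}, cA K * x * y * z = cA K * x * z * y) ∧
    (cA K * aA K * bA K = cA K * bA K * aA K) ∧
    (∀ w₁ w₂ : List (Fin 2), w₁.count 0 = w₂.count 0 → w₁.count 1 = w₂.count 1 →
      cA K * wordProd K w₁ = cA K * wordProd K w₂) := by
  refine ⟨?_, ?_, ?_⟩
  · intro x y hy z hz
    rw [Submodule.mem_span_pair] at hy hz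
    obtain ⟨α, β, rfl⟩ := hy
    obtain ⟨γ, δ, rfl⟩ := hz
    simp only [mul_add, add_mul, mul_smul_comm, smul_mul_assoc, smul_smul]
    rw [show cA K * x * bA K * aA K = cA K * x * aA K * bA K from swap K x]
    module
  · simpa using (swap K 1).symm
  · intro w₁ w₂ h0 h1
    rw [c_word, c_word, h0, h1]
end
end

section
/- In the algebra 𝔸, the family consisting of a, b, and the elements c·aⁱ·bʲ for all integers i, j ≥ 0 with i + j odd (where c := a·b − b·a and powers are taken in 𝔸) is linearly independent over K. -/
noncomputable section

namespace S12
open MvPolynomial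
variable (K : Type*) [Field K]

abbrev R := MvPolynomial (Fin 2) K
abbrev T := Matrix (Fin 2) (Fin 2) (R K)
def Ma : T K := !![0, 1; 0, X 0]
def Mb : T K := !![0, 0; 0, X 1]

lemma relA : Ma K * Ma K * Mb K = Ma K * Mb K * Ma K := by
  ext i j
  fin_cases i <;> fin_cases j <;>
    simp [Ma, Mb, Matrix.mul_apply, Fin.sum_univ_two] <;> ring_nf

lemma relB : Mb K * Mb K * Ma K = Mb K * Ma K * Mb K := by
  ext i j
  fin_cases i <;> fin_cases j <;>
    simp [Ma, Mb, Matrix.mul_apply, Fin.sum_univ_two] <;> ring_nf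

def φ : FreeAlgebra K (Fin 2) →ₐ[K] T K := FreeAlgebra.lift K ![Ma K, Mb K]

lemma φA : φ K (Agen K) = Ma K := by simp [φ, Agen]
lemma φB : φ K (Bgen K) = Mb K := by simp [φ, Bgen]

def ψ : AAlg K →ₐ[K] T K :=
  RingQuot.liftAlgHom K ⟨φ K, by
    rintro x y (_|_)
    · simp only [map_mul, φA, φB]; exact relA K
    · simp only [map_mul, φA, φB]; exact relB K⟩

lemma ψmk (x) : ψ K (RingQuot.mkAlgHom K (ARel K) x) = φ K x := by
  rw [ψ, RingQuot.liftAlgHom_mkAlgHom_apply]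

lemma ψa : ψ K (aA K) = Ma K := by rw [aA, ψmk, φA]
lemma ψb : ψ K (bA K) = Mb K := by rw [bA, ψmk, φB]

lemma ψc : ψ K (cA K) = !![0, X 1; 0, 0] := by
  rw [cA, map_sub, map_mul, map_mul, ψa, ψb]
  ext i j
  fin_cases i <;> fin_cases j <;>
    simp [Ma, Mb, Matrix.mul_apply, Fin.sum_univ_two] <;> ring_nf

lemma mulMa (p : R K) : !![0, p; 0, 0] * Ma K = !![0, p * X 0; 0, 0] := by
  ext i j
  fin_cases i <;> fin_cases j <;>
    simp [Ma, Matrix.mul_apply, Fin.sum_univ_two]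

lemma mulMb (p : R K) : !![0, p; 0, 0] * Mb K = !![0, p * X 1; 0, 0] := by
  ext i j
  fin_cases i <;> fin_cases j <;>
    simp [Mb, Matrix.mul_apply, Fin.sum_univ_two]

lemma powMa (p : R K) (i : ℕ) :
    !![0, p; 0, 0] * Ma K ^ i = !![0, p * X 0 ^ i; 0, 0] := by
  induction i with
  | zero => simp
  | succ n ih => rw [pow_succ, ← mul_assoc, ih, mulMa, pow_succ, mul_assoc]

lemma powMb (p : R K) (i : ℕ) :
    !![0, p; 0, 0] * Mb K ^ i = !![0, p * X 1 ^ i; 0, 0] := by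
  induction i with
  | zero => simp
  | succ n ih => rw [pow_succ, ← mul_assoc, ih, mulMb, pow_succ, mul_assoc]

lemma ψcab (i j : ℕ) :
    ψ K (cA K * aA K ^ i * bA K ^ j) = !![0, X 1 * X 0 ^ i * X 1 ^ j; 0, 0] := by
  rw [map_mul, map_mul, map_pow, map_pow, ψa, ψb, ψc, powMa, powMb]

/-- The linear map extracting the (0,1) and (1,1) entries. -/
def π : T K →ₗ[K] R K × R K where
  toFun M := (M 0 1, M 1 1)
  map_add' _ _ := rfl
  map_smul' _ _ := rfl

def L : AAlg K →ₗ[K] R K × R K := (π K).comp (ψ K).toLinearMap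

def v₁ : Bool → R K × R K := fun b => cond b (1, X 0) (0, X 1)

def w : {p : ℕ × ℕ // Odd (p.1 + p.2)} → R K × R K :=
  fun s => (X 1 * X 0 ^ s.1.1 * X 1 ^ s.1.2, 0)

lemma hw : LinearIndependent K (w K) := by
  have hm : LinearIndependent K
      (fun s : {p : ℕ × ℕ // Odd (p.1 + p.2)} =>
        (X 1 * X 0 ^ s.1.1 * X 1 ^ s.1.2 : R K)) := by
    have hb := (MvPolynomial.basisMonomials (Fin 2) K).linearIndependent
    have hinj : Function.Injective
        (fun s : {p : ℕ × ℕ // Odd (p.1 + p.2)} =>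
          (Finsupp.single (0 : Fin 2) s.1.1 + Finsupp.single 1 (s.1.2 + 1))) := by
      intro s t h
      have h0 := DFunLike.congr_fun h 0
      have h1 := DFunLike.congr_fun h 1
      simp [Finsupp.single_apply] at h0 h1
      exact Subtype.ext (Prod.ext h0 h1)
    have := hb.comp _ hinj
    convert this using 1
    funext s
    show (X 1 * X 0 ^ s.1.1 * X 1 ^ s.1.2 : R K) = _
    rw [Function.comp_apply, coe_basisMonomials]
    rw [show (X 1 * X 0 ^ s.1.1 * X 1 ^ s.1.2 : R K)
        = X 0 ^ s.1.1 * X 1 ^ (s.1.2 + 1) by ring,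
      X_pow_eq_monomial, X_pow_eq_monomial, monomial_mul, one_mul]
    all_goals rfl
  have := hm.map' (LinearMap.inl K (R K) (R K)) Submodule.ker_inl
  exact this

lemma hv : LinearIndependent K (v₁ K) := by
  rw [Fintype.linearIndependent_iff]
  intro g hg
  rw [Fintype.sum_bool] at hg
  simp only [v₁, cond_true, cond_false, Prod.smul_mk, Prod.mk_add_mk,
    Prod.mk_eq_zero, smul_zero, add_zero, zero_add] at hg
  obtain ⟨h1, h2⟩ := hg
  have hgt : g true = 0 := by
    rcases smul_eq_zero.mp h1 with h | h
    · exact h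
    · exact absurd h one_ne_zero
  rw [hgt, zero_smul, zero_add] at h2
  have hgf : g false = 0 := by
    rcases smul_eq_zero.mp h2 with h | h
    · exact h
    · exact absurd h (X_ne_zero 1)
  intro b; cases b
  · exact hgf
  · exact hgt

lemma hdisj : Disjoint (Submodule.span K (Set.range (v₁ K)))
    (Submodule.span K (Set.range (w K))) := by
  rw [Submodule.disjoint_def]
  intro z hz1 hz2
  have hz2' : z.2 = 0 := by
    have hle : Submodule.span K (Set.range (w K)) ≤ (⊤ : Submodule K (R K)).prod ⊥ := by
      rw [Submodule.span_le]
      rintro _ ⟨s, rfl⟩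
      exact ⟨Submodule.mem_top, rfl⟩
    exact (hle hz2).2
  have hrange : Set.range (v₁ K) = {((1 : R K), X 0), ((0 : R K), X 1)} := by
    ext x
    constructor
    · rintro ⟨b, rfl⟩
      cases b
      · right; rfl
      · left; rfl
    · rintro (rfl | h)
      · exact ⟨true, rfl⟩
      · exact ⟨false, by rw [Set.mem_singleton_iff] at h; rw [h]; rfl⟩
  rw [hrange] at hz1
  obtain ⟨s, t, hst⟩ := Submodule.mem_span_pair.mp hz1
  have h2 : s • (X 0 : R K) + t • X 1 = 0 := by
    have := congrArg Prod.snd hst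
    simpa [hz2'] using this
  have hs : s = 0 := by
    have := congrArg (coeff (Finsupp.single (0 : Fin 2) 1)) h2
    simpa [coeff_smul, coeff_X', Finsupp.single_eq_single_iff] using this
  have ht : t = 0 := by
    have := congrArg (coeff (Finsupp.single (1 : Fin 2) 1)) h2
    simpa [coeff_smul, coeff_X', Finsupp.single_eq_single_iff] using this
  rw [← hst, hs, ht, zero_smul, zero_smul, add_zero]

end S12

/-- The family consisting of `a`, `b` and the elements `c·aⁱ·bʲ`
(for `i + j` odd) is linearly independent over `K`. -/
theorem stmt_12 (K : Type*) [Field K] [CharZero K] :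
    LinearIndependent K
      (fun p : Bool ⊕ {p : ℕ × ℕ // Odd (p.1 + p.2)} =>
        match p with
        | Sum.inl true => aA K
        | Sum.inl false => bA K
        | Sum.inr ⟨(i, j), _⟩ => cA K * (aA K) ^ i * (bA K) ^ j) := by
  apply LinearIndependent.of_comp (S12.L K)
  have hcomp : (⇑(S12.L K) ∘ fun p : Bool ⊕ {p : ℕ × ℕ // Odd (p.1 + p.2)} =>
      match p with
      | Sum.inl true => aA K
      | Sum.inl false => bA K
      | Sum.inr ⟨(i, j), _⟩ => cA K * (aA K) ^ i * (bA K) ^ j)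
      = Sum.elim (S12.v₁ K) (S12.w K) := by
    funext p
    rcases p with b | ⟨⟨i, j⟩, h⟩
    · cases b
      · show S12.L K (bA K) = _
        simp [S12.L, S12.π, S12.ψb, S12.Mb, S12.v₁, LinearMap.coe_mk, AddHom.coe_mk]
        rfl
      · show S12.L K (aA K) = _
        simp [S12.L, S12.π, S12.ψa, S12.Ma, S12.v₁, LinearMap.coe_mk, AddHom.coe_mk]
        rfl
    · show S12.L K (cA K * aA K ^ i * bA K ^ j) = _
      simp [S12.L, S12.π, S12.ψcab, S12.w, LinearMap.coe_mk, AddHom.coe_mk]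
      rfl
  rw [hcomp]
  exact linearIndependent_sum.mpr ⟨S12.hv K, S12.hw K, S12.hdisj K⟩
end
end

section
/- Let T be the K-linear span in 𝔸 of the set {a, b} ∪ {c·aⁱ·bʲ : i, j ≥ 0, i + j odd}, where c := a·b − b·a. Then T is closed under the double commutator triple product [x,y,z] := [[x,y],z] (with [x,y] := xy − yx), and (T, [·,·,·]) is a commutative automorphic Lie triple system: for all x, y, z, x', y' ∈ T, [x,y,z] = −[y,x,z], [x,y,z] + [y,z,x] + [z,x,y] = 0, and [[x,y,z],x',y'] = [[x,x',y'],y,z] + [x,[y,x',y'],z] + [x,y,[z,x',y']]. -/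
noncomputable section

/-- The `K`-span in `𝔸` of `{a, b} ∪ {c·aⁱ·bʲ : i + j odd}`. -/
def TSpan (K : Type*) [Field K] : Submodule K (AAlg K) :=
  Submodule.span K
    ({aA K, bA K} ∪ {w | ∃ i j : ℕ, Odd (i + j) ∧ w = cA K * (aA K) ^ i * (bA K) ^ j})

/-- The double commutator triple product `[x,y,z] := [[x,y],z]`. -/
def dcomm {R : Type*} [Ring R] (x y z : R) : R :=
  (x * y - y * x) * z - z * (x * y - y * x)

namespace S13

variable (K : Type*) [Field K]

/-- commutator -/
def bb {R : Type*} [Ring R] (x y : R) : R := x * y - y * x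

lemma dcomm_eq {R : Type*} [Ring R] (x y z : R) : dcomm x y z = bb (bb x y) z := rfl

/-- c-monomials -/
def Cm (i j : ℕ) : AAlg K := cA K * (aA K) ^ i * (bA K) ^ j

def V : Submodule K (AAlg K) := Submodule.span K {aA K, bA K}
def CT : Submodule K (AAlg K) := Submodule.span K {w | ∃ i j : ℕ, w = Cm K i j}
def Codd : Submodule K (AAlg K) :=
  Submodule.span K {w | ∃ i j : ℕ, Odd (i + j) ∧ w = cA K * (aA K) ^ i * (bA K) ^ j}
def Cev : Submodule K (AAlg K) :=
  Submodule.span K {w | ∃ i j : ℕ, Even (i + j) ∧ w = Cm K i j}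

lemma TSpan_eq : TSpan K = V K ⊔ Codd K := by
  rw [TSpan, Submodule.span_union]; rfl

lemma rel_aab : aA K * aA K * bA K = aA K * bA K * aA K := by
  have h := RingQuot.mkAlgHom_rel K (ARel.aab (K := K))
  simpa only [map_mul, aA, bA] using h

lemma rel_bba : bA K * bA K * aA K = bA K * aA K * bA K := by
  have h := RingQuot.mkAlgHom_rel K (ARel.bba (K := K))
  simpa only [map_mul, aA, bA] using h

lemma ac : aA K * cA K = 0 := by
  rw [cA, mul_sub, ← mul_assoc, ← mul_assoc, rel_aab, sub_self]

lemma bc : bA K * cA K = 0 := by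
  rw [cA, mul_sub, ← mul_assoc, ← mul_assoc, rel_bba, sub_self]

lemma ccz : cA K * cA K = 0 := by
  nth_rewrite 1 [cA]
  rw [sub_mul, mul_assoc, mul_assoc, ac, bc, mul_zero, mul_zero, sub_self]

lemma pow_a_c (i : ℕ) : (aA K) ^ (i + 1) * cA K = 0 := by
  rw [pow_succ, mul_assoc, ac, mul_zero]

lemma pow_b_c (j : ℕ) : (bA K) ^ (j + 1) * cA K = 0 := by
  rw [pow_succ, mul_assoc, bc, mul_zero]

lemma Cm_c (i j : ℕ) : Cm K i j * cA K = 0 := by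
  cases j with
  | zero =>
    cases i with
    | zero => simpa [Cm] using ccz K
    | succ n => rw [Cm, pow_zero, mul_one, mul_assoc, pow_a_c, mul_zero]
  | succ n => rw [Cm, mul_assoc, pow_b_c, mul_zero]

lemma V_mul_c : ∀ x ∈ V K, x * cA K = 0 := by
  intro x hx
  have h : V K ≤ LinearMap.ker (LinearMap.mulRight K (cA K)) := by
    rw [V, Submodule.span_le]
    rintro y (rfl | rfl) <;>
      simp [LinearMap.mem_ker, ac, bc]
  simpa using h hx

lemma CT_mul_c : ∀ m ∈ CT K, m * cA K = 0 := by
  intro m hm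
  have h : CT K ≤ LinearMap.ker (LinearMap.mulRight K (cA K)) := by
    rw [CT, Submodule.span_le]
    rintro y ⟨i, j, rfl⟩
    simp [LinearMap.mem_ker, Cm_c]
  simpa using h hm

lemma kill (x : AAlg K) (hx : x * cA K = 0) : ∀ m ∈ CT K, x * m = 0 := by
  intro m hm
  have h : CT K ≤ LinearMap.ker (LinearMap.mulLeft K x) := by
    rw [CT, Submodule.span_le]
    rintro y ⟨i, j, rfl⟩
    simp only [SetLike.mem_coe, LinearMap.mem_ker, LinearMap.mulLeft_apply]
    rw [Cm, ← mul_assoc, ← mul_assoc, hx, zero_mul, zero_mul]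
  simpa using h hm


lemma Cm_mul_b (i j : ℕ) : Cm K i j * bA K = Cm K i (j + 1) := by
  rw [Cm, Cm, pow_succ, ← mul_assoc]

lemma Cm_mul_ba (i j : ℕ) : Cm K i j * (bA K * aA K) = Cm K i j * (aA K * bA K) := by
  have h := Cm_c K i j
  rw [cA, mul_sub] at h
  exact (sub_eq_zero.mp h).symm

lemma Cm_mul_a (i j : ℕ) : Cm K i j * aA K = Cm K (i + 1) j := by
  induction j with
  | zero =>
    simp only [Cm, pow_zero, mul_one, pow_succ, mul_assoc]
  | succ n ih =>
    calc Cm K i (n + 1) * aA K = Cm K i n * (bA K * aA K) := by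
          rw [← Cm_mul_b, mul_assoc]
      _ = Cm K i n * (aA K * bA K) := Cm_mul_ba K i n
      _ = Cm K i n * aA K * bA K := by rw [mul_assoc]
      _ = Cm K (i + 1) n * bA K := by rw [ih]
      _ = Cm K (i + 1) (n + 1) := Cm_mul_b K (i + 1) n

lemma Codd_le_CT : Codd K ≤ CT K := by
  rw [Codd, CT, Submodule.span_le]
  rintro y ⟨i, j, -, rfl⟩
  exact Submodule.subset_span ⟨i, j, rfl⟩

lemma Cev_le_CT : Cev K ≤ CT K := by
  rw [Cev, CT, Submodule.span_le]
  rintro y ⟨i, j, -, rfl⟩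
  exact Submodule.subset_span ⟨i, j, rfl⟩

lemma Cm_mem_Codd {i j : ℕ} (h : Odd (i + j)) : Cm K i j ∈ Codd K :=
  Submodule.subset_span ⟨i, j, h, rfl⟩

lemma Cm_mem_Cev {i j : ℕ} (h : Even (i + j)) : Cm K i j ∈ Cev K :=
  Submodule.subset_span ⟨i, j, h, rfl⟩

/-- Right multiplication by elements of `V` sends `Cev` into `Codd`. -/
lemma Cev_mulV : ∀ m ∈ Cev K, ∀ v ∈ V K, m * v ∈ Codd K := by
  have ha : ∀ m ∈ Cev K, m * aA K ∈ Codd K := by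
    intro m hm
    have h : Cev K ≤ Submodule.comap (LinearMap.mulRight K (aA K)) (Codd K) := by
      rw [Cev, Submodule.span_le]
      rintro y ⟨i, j, hij, rfl⟩
      simp only [SetLike.mem_coe, Submodule.mem_comap, LinearMap.mulRight_apply]
      rw [Cm_mul_a]
      exact Cm_mem_Codd K (by rw [Nat.odd_iff]; rw [Nat.even_iff] at hij; omega)
    simpa using h hm
  have hb : ∀ m ∈ Cev K, m * bA K ∈ Codd K := by
    intro m hm
    have h : Cev K ≤ Submodule.comap (LinearMap.mulRight K (bA K)) (Codd K) := by
      rw [Cev, Submodule.span_le]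
      rintro y ⟨i, j, hij, rfl⟩
      simp only [SetLike.mem_coe, Submodule.mem_comap, LinearMap.mulRight_apply]
      rw [Cm_mul_b]
      exact Cm_mem_Codd K (by rw [Nat.odd_iff]; rw [Nat.even_iff] at hij; omega)
    simpa using h hm
  intro m hm v hv
  have h : V K ≤ Submodule.comap (LinearMap.mulLeft K m) (Codd K) := by
    rw [V, Submodule.span_le]
    rintro y (rfl | rfl) <;>
      simp only [SetLike.mem_coe, Submodule.mem_comap, LinearMap.mulLeft_apply]
    · exact ha m hm
    · exact hb m hm
  simpa using h hv

/-- Right multiplication by elements of `V` sends `Codd` into `Cev`. -/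
lemma Codd_mulV : ∀ m ∈ Codd K, ∀ v ∈ V K, m * v ∈ Cev K := by
  have ha : ∀ m ∈ Codd K, m * aA K ∈ Cev K := by
    intro m hm
    have h : Codd K ≤ Submodule.comap (LinearMap.mulRight K (aA K)) (Cev K) := by
      rw [Codd, Submodule.span_le]
      rintro y ⟨i, j, hij, rfl⟩
      simp only [SetLike.mem_coe, Submodule.mem_comap, LinearMap.mulRight_apply]
      have : (cA K * aA K ^ i * bA K ^ j) = Cm K i j := rfl
      rw [this, Cm_mul_a]
      exact Cm_mem_Cev K (by rw [Nat.even_iff]; rw [Nat.odd_iff] at hij; omega)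
    simpa using h hm
  have hb : ∀ m ∈ Codd K, m * bA K ∈ Cev K := by
    intro m hm
    have h : Codd K ≤ Submodule.comap (LinearMap.mulRight K (bA K)) (Cev K) := by
      rw [Codd, Submodule.span_le]
      rintro y ⟨i, j, hij, rfl⟩
      simp only [SetLike.mem_coe, Submodule.mem_comap, LinearMap.mulRight_apply]
      have : (cA K * aA K ^ i * bA K ^ j) = Cm K i j := rfl
      rw [this, Cm_mul_b]
      exact Cm_mem_Cev K (by rw [Nat.even_iff]; rw [Nat.odd_iff] at hij; omega)
    simpa using h hm
  intro m hm v hv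
  have h : V K ≤ Submodule.comap (LinearMap.mulLeft K m) (Cev K) := by
    rw [V, Submodule.span_le]
    rintro y (rfl | rfl) <;>
      simp only [SetLike.mem_coe, Submodule.mem_comap, LinearMap.mulLeft_apply]
    · exact ha m hm
    · exact hb m hm
  simpa using h hv

/-- Right multiplication by elements of `V` preserves `CT`. -/
lemma CT_mulV : ∀ m ∈ CT K, ∀ v ∈ V K, m * v ∈ CT K := by
  have ha : ∀ m ∈ CT K, m * aA K ∈ CT K := by
    intro m hm
    have h : CT K ≤ Submodule.comap (LinearMap.mulRight K (aA K)) (CT K) := by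
      rw [CT, Submodule.span_le]
      rintro y ⟨i, j, rfl⟩
      simp only [SetLike.mem_coe, Submodule.mem_comap, LinearMap.mulRight_apply]
      rw [Cm_mul_a]
      exact Submodule.subset_span ⟨i + 1, j, rfl⟩
    simpa using h hm
  have hb : ∀ m ∈ CT K, m * bA K ∈ CT K := by
    intro m hm
    have h : CT K ≤ Submodule.comap (LinearMap.mulRight K (bA K)) (CT K) := by
      rw [CT, Submodule.span_le]
      rintro y ⟨i, j, rfl⟩
      simp only [SetLike.mem_coe, Submodule.mem_comap, LinearMap.mulRight_apply]
      rw [Cm_mul_b]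
      exact Submodule.subset_span ⟨i, j + 1, rfl⟩
    simpa using h hm
  intro m hm v hv
  have h : V K ≤ Submodule.comap (LinearMap.mulLeft K m) (CT K) := by
    rw [V, Submodule.span_le]
    rintro y (rfl | rfl) <;>
      simp only [SetLike.mem_coe, Submodule.mem_comap, LinearMap.mulLeft_apply]
    · exact ha m hm
    · exact hb m hm
  simpa using h hv


/-- commutators of elements of `V` lie in the span of `c`. -/
lemma bbV_spanc : ∀ u ∈ V K, ∀ v ∈ V K, u * v - v * u ∈ Submodule.span K {cA K} := by
  have ha : ∀ u ∈ V K, u * aA K - aA K * u ∈ Submodule.span K {cA K} := by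
    intro u hu
    have h : V K ≤ Submodule.comap
        (LinearMap.mulRight K (aA K) - LinearMap.mulLeft K (aA K))
        (Submodule.span K {cA K}) := by
      rw [V, Submodule.span_le]
      rintro y (rfl | rfl) <;>
        simp only [SetLike.mem_coe, Submodule.mem_comap, LinearMap.sub_apply,
          LinearMap.mulLeft_apply, LinearMap.mulRight_apply]
      · rw [sub_self]; exact zero_mem _
      · have : bA K * aA K - aA K * bA K = -(cA K) := by rw [cA, neg_sub]
        rw [this]
        exact neg_mem (Submodule.mem_span_singleton_self _)
    simpa using h hu
  have hb : ∀ u ∈ V K, u * bA K - bA K * u ∈ Submodule.span K {cA K} := by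
    intro u hu
    have h : V K ≤ Submodule.comap
        (LinearMap.mulRight K (bA K) - LinearMap.mulLeft K (bA K))
        (Submodule.span K {cA K}) := by
      rw [V, Submodule.span_le]
      rintro y (rfl | rfl) <;>
        simp only [SetLike.mem_coe, Submodule.mem_comap, LinearMap.sub_apply,
          LinearMap.mulLeft_apply, LinearMap.mulRight_apply]
      · have : aA K * bA K - bA K * aA K = cA K := rfl
        rw [this]
        exact Submodule.mem_span_singleton_self _
      · rw [sub_self]; exact zero_mem _
    simpa using h hu
  intro u hu v hv
  have h : V K ≤ Submodule.comap
      (LinearMap.mulLeft K u - LinearMap.mulRight K u)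
      (Submodule.span K {cA K}) := by
    rw [V, Submodule.span_le]
    rintro y (rfl | rfl) <;>
      simp only [SetLike.mem_coe, Submodule.mem_comap, LinearMap.sub_apply,
        LinearMap.mulLeft_apply, LinearMap.mulRight_apply]
    · exact ha u hu
    · exact hb u hu
  simpa using h hv

lemma CT_mul_spanc (m : AAlg K) (hm : m ∈ CT K) :
    ∀ s ∈ Submodule.span K {cA K}, m * s = 0 := by
  intro s hs
  obtain ⟨κ, rfl⟩ := Submodule.mem_span_singleton.mp hs
  rw [mul_smul_comm, CT_mul_c K m hm, smul_zero]

/-- right multiplications by elements of `V` commute after a `CT` prefix. -/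
lemma comm2 (m : AAlg K) (hm : m ∈ CT K) (u : AAlg K) (hu : u ∈ V K)
    (v : AAlg K) (hv : v ∈ V K) : m * u * v = m * v * u := by
  have h := CT_mul_spanc K m hm _ (bbV_spanc K u hu v hv)
  rw [mul_sub] at h
  rw [mul_assoc, mul_assoc]
  exact sub_eq_zero.mp h

lemma perm3 (m : AAlg K) (hm : m ∈ CT K) (x : AAlg K) (hx : x ∈ V K)
    (y : AAlg K) (hy : y ∈ V K) (z : AAlg K) (hz : z ∈ V K) :
    m * x * y * z = m * z * y * x := by
  calc m * x * y * z = m * x * z * y := comm2 K (m * x) (CT_mulV K m hm x hx) y hy z hz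
    _ = m * z * x * y := by rw [comm2 K m hm x hx z hz]
    _ = m * z * y * x := comm2 K (m * z) (CT_mulV K m hm z hz) x hx y hy

lemma perm4 (m : AAlg K) (hm : m ∈ CT K) (t : AAlg K) (ht : t ∈ V K)
    (w : AAlg K) (hw : w ∈ V K) (u : AAlg K) (hu : u ∈ V K)
    (v : AAlg K) (hv : v ∈ V K) :
    m * t * w * u * v = m * u * v * t * w := by
  calc m * t * w * u * v = m * t * u * w * v := by
        rw [comm2 K (m * t) (CT_mulV K m hm t ht) w hw u hu]
    _ = m * u * t * w * v := by rw [comm2 K m hm t ht u hu]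
    _ = m * u * t * v * w := comm2 K (m * u * t)
        (CT_mulV K _ (CT_mulV K m hm u hu) t ht) w hw v hv
    _ = m * u * v * t * w := by
        rw [comm2 K (m * u) (CT_mulV K m hm u hu) t ht v hv]

/-- commutators of elements of `V` lie in `Cev`. -/
lemma bbV_mem_Cev : ∀ s ∈ V K, ∀ t ∈ V K, bb s t ∈ Cev K := by
  have hc : cA K ∈ Cev K := by
    have : cA K = Cm K 0 0 := by simp [Cm]
    rw [this]
    exact Cm_mem_Cev K (by simp)
  have ha : ∀ s ∈ V K, s * aA K - aA K * s ∈ Cev K := by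
    intro s hs
    have h : V K ≤ Submodule.comap
        (LinearMap.mulRight K (aA K) - LinearMap.mulLeft K (aA K)) (Cev K) := by
      rw [V, Submodule.span_le]
      rintro y (rfl | rfl) <;>
        simp only [SetLike.mem_coe, Submodule.mem_comap, LinearMap.sub_apply,
          LinearMap.mulLeft_apply, LinearMap.mulRight_apply]
      · rw [sub_self]; exact zero_mem _
      · have : bA K * aA K - aA K * bA K = -(cA K) := by rw [cA, neg_sub]
        rw [this]; exact neg_mem hc
    simpa using h hs
  have hbl : ∀ s ∈ V K, s * bA K - bA K * s ∈ Cev K := by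
    intro s hs
    have h : V K ≤ Submodule.comap
        (LinearMap.mulRight K (bA K) - LinearMap.mulLeft K (bA K)) (Cev K) := by
      rw [V, Submodule.span_le]
      rintro y (rfl | rfl) <;>
        simp only [SetLike.mem_coe, Submodule.mem_comap, LinearMap.sub_apply,
          LinearMap.mulLeft_apply, LinearMap.mulRight_apply]
      · have : aA K * bA K - bA K * aA K = cA K := rfl
        rw [this]; exact hc
      · rw [sub_self]; exact zero_mem _
    simpa using h hs
  intro s hs t ht
  have h : V K ≤ Submodule.comap
      (LinearMap.mulLeft K s - LinearMap.mulRight K s) (Cev K) := by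
    rw [V, Submodule.span_le]
    rintro y (rfl | rfl) <;>
      simp only [SetLike.mem_coe, Submodule.mem_comap, LinearMap.sub_apply,
        LinearMap.mulLeft_apply, LinearMap.mulRight_apply]
    · exact ha s hs
    · exact hbl s hs
  simpa [bb] using h ht


/-- trilinear Jacobi-type expression -/
def Ee {R : Type*} [Ring R] (x y z : R) : R := bb x y * z + bb y z * x + bb z x * y

lemma Ee_rot {R : Type*} [Ring R] (x y z : R) : Ee x y z = Ee y z x := by
  simp only [Ee]; abel

lemma Ee_add (x w y z : AAlg K) : Ee (x + w) y z = Ee x y z + Ee w y z := by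
  simp only [Ee, bb, add_mul, mul_add, sub_mul, mul_assoc]; abel

lemma Ee_smul (κ : K) (x y z : AAlg K) : Ee (κ • x) y z = κ • Ee x y z := by
  simp only [Ee, bb, smul_sub, smul_add, smul_mul_assoc, mul_smul_comm, sub_mul,
    add_mul, mul_assoc]

lemma bb_neg_left {R : Type*} [Ring R] (x y : R) : bb (-x) y = -(bb x y) := by
  simp only [bb, neg_mul, mul_neg]
  abel

lemma Ee_zero1 (y z : AAlg K) : Ee (0 : AAlg K) y z = 0 := by
  simp [Ee, bb]

/-- the 2-dimensional Cramer/Jacobi identity on `V`. -/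
lemma Jid : ∀ s ∈ V K, ∀ t ∈ V K, ∀ u ∈ V K, Ee s t u = 0 := by
  have base : ∀ s ∈ ({aA K, bA K} : Set (AAlg K)), ∀ t ∈ ({aA K, bA K} : Set (AAlg K)),
      ∀ u ∈ ({aA K, bA K} : Set (AAlg K)), Ee s t u = 0 := by
    rintro s (rfl | rfl) t (rfl | rfl) u (rfl | rfl) <;>
      (simp only [Ee, bb, sub_mul, mul_assoc]; abel)
  have step1 : ∀ t ∈ ({aA K, bA K} : Set (AAlg K)), ∀ u ∈ ({aA K, bA K} : Set (AAlg K)),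
      ∀ s ∈ V K, Ee s t u = 0 := by
    intro t ht u hu s hs
    rw [V] at hs
    induction hs using Submodule.span_induction with
    | mem x hx => exact base x hx t ht u hu
    | zero => exact Ee_zero1 K t u
    | add x y hx hy ihx ihy => rw [Ee_add, ihx, ihy, add_zero]
    | smul κ x hx ih => rw [Ee_smul, ih, smul_zero]
  have step2 : ∀ u ∈ ({aA K, bA K} : Set (AAlg K)), ∀ s ∈ V K, ∀ t ∈ V K,
      Ee s t u = 0 := by
    intro u hu s hs t ht
    rw [Ee_rot]
    rw [V] at ht
    induction ht using Submodule.span_induction with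
    | mem x hx =>
      rw [Ee_rot, Ee_rot]
      exact step1 x hx u hu s hs
    | zero => exact Ee_zero1 K u s
    | add x y hx hy ihx ihy => rw [Ee_add, ihx, ihy, add_zero]
    | smul κ x hx ih => rw [Ee_smul, ih, smul_zero]
  intro s hs t ht u hu
  rw [Ee_rot, Ee_rot]
  rw [V] at hu
  induction hu using Submodule.span_induction with
  | mem x hx =>
    rw [Ee_rot]
    exact step2 x hx s hs t ht
  | zero => exact Ee_zero1 K s t
  | add x y hx hy ihx ihy => rw [Ee_add, ihx, ihy, add_zero]
  | smul κ x hx ih => rw [Ee_smul, ih, smul_zero]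

/-- bracket of a `CT` element with a decomposed `T` element. -/
lemma bbm (m : AAlg K) (hm : m ∈ CT K) (t : AAlg K) (ht : t ∈ V K)
    (q : AAlg K) (hq : q ∈ CT K) : bb m (t + q) = m * t := by
  have h1 : m * q = 0 := kill K m (CT_mul_c K m hm) q hq
  have h2 : (t + q) * m = 0 := kill K (t + q)
    (by rw [add_mul, V_mul_c K t ht, CT_mul_c K q hq, add_zero]) m hm
  rw [bb, mul_add, h1, h2, add_zero, sub_zero]

lemma bbxq (s : AAlg K) (hs : s ∈ V K) (p : AAlg K) (hp : p ∈ CT K)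
    (m : AAlg K) (hm : m ∈ CT K) : bb (s + p) m = -(m * s) := by
  have h1 : (s + p) * m = 0 := kill K (s + p)
    (by rw [add_mul, V_mul_c K s hs, CT_mul_c K p hp, add_zero]) m hm
  have h2 : m * p = 0 := kill K m (CT_mul_c K m hm) p hp
  rw [bb, h1, mul_add, h2, add_zero, zero_sub]

lemma B2 (s : AAlg K) (hs : s ∈ V K) (p : AAlg K) (hp : p ∈ CT K)
    (t : AAlg K) (ht : t ∈ V K) (q : AAlg K) (hq : q ∈ CT K) :
    bb (s + p) (t + q) = bb s t + p * t - q * s := by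
  have sq : s * q = 0 := kill K s (V_mul_c K s hs) q hq
  have pq : p * q = 0 := kill K p (CT_mul_c K p hp) q hq
  have tp : t * p = 0 := kill K t (V_mul_c K t ht) p hp
  have qp : q * p = 0 := kill K q (CT_mul_c K q hq) p hp
  simp only [bb, add_mul, mul_add, sq, pq, tp, qp, add_zero, zero_add]
  abel

end S13

open S13

/-- `T` is closed under the double-commutator triple product and is a
commutative automorphic Lie triple system. -/
theorem stmt_13 (K : Type*) [Field K] [CharZero K] :
    (∀ x ∈ TSpan K, ∀ y ∈ TSpan K, ∀ z ∈ TSpan K, dcomm x y z ∈ TSpan K) ∧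
    (∀ x ∈ TSpan K, ∀ y ∈ TSpan K, ∀ z ∈ TSpan K, dcomm x y z = - dcomm y x z) ∧
    (∀ x ∈ TSpan K, ∀ y ∈ TSpan K, ∀ z ∈ TSpan K,
      dcomm x y z + dcomm y z x + dcomm z x y = 0) ∧
    (∀ x ∈ TSpan K, ∀ y ∈ TSpan K, ∀ z ∈ TSpan K, ∀ x' ∈ TSpan K, ∀ y' ∈ TSpan K,
      dcomm (dcomm x y z) x' y'
        = dcomm (dcomm x x' y') y z + dcomm x (dcomm y x' y') z
          + dcomm x y (dcomm z x' y')) := by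
  refine ⟨?_, ?_, ?_, ?_⟩
  · -- closure
    intro x hx y hy z hz
    rw [TSpan_eq] at hx hy hz ⊢
    obtain ⟨s, hs, p, hp, rfl⟩ := Submodule.mem_sup.mp hx
    obtain ⟨t, ht, q, hq, rfl⟩ := Submodule.mem_sup.mp hy
    obtain ⟨w, hw, r, hr, rfl⟩ := Submodule.mem_sup.mp hz
    have hpT := Codd_le_CT K hp
    have hqT := Codd_le_CT K hq
    have hrT := Codd_le_CT K hr
    have hMeq : bb (s + p) (t + q) = bb s t + p * t - q * s := B2 K s hs p hpT t ht q hqT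
    have hMev : bb s t + p * t - q * s ∈ Cev K :=
      sub_mem (add_mem (bbV_mem_Cev K s hs t ht) (Codd_mulV K p hp t ht))
        (Codd_mulV K q hq s hs)
    rw [dcomm_eq, hMeq, bbm K _ (Cev_le_CT K hMev) w hw r hrT]
    exact Submodule.mem_sup_right (Cev_mulV K _ hMev w hw)
  · intro x _ y _ z _
    simp only [dcomm, sub_mul, mul_sub, mul_assoc]
    abel
  · intro x _ y _ z _
    simp only [dcomm, sub_mul, mul_sub, mul_assoc]
    abel
  · -- derivation identity
    intro x hx y hy z hz x' hx' y' hy'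
    rw [TSpan_eq] at hx hy hz hx' hy'
    obtain ⟨s, hs, p, hp, rfl⟩ := Submodule.mem_sup.mp hx
    obtain ⟨t, ht, q, hq, rfl⟩ := Submodule.mem_sup.mp hy
    obtain ⟨w, hw, r, hr, rfl⟩ := Submodule.mem_sup.mp hz
    obtain ⟨u, hu, p', hp', rfl⟩ := Submodule.mem_sup.mp hx'
    obtain ⟨v, hv, q', hq', rfl⟩ := Submodule.mem_sup.mp hy'
    have hpT := Codd_le_CT K hp
    have hqT := Codd_le_CT K hq
    have hrT := Codd_le_CT K hr
    have hp'T := Codd_le_CT K hp'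
    have hq'T := Codd_le_CT K hq'
    have hbbstT : bb s t ∈ CT K := Cev_le_CT K (bbV_mem_Cev K s hs t ht)
    have hMeq : bb (s + p) (t + q) = bb s t + p * t - q * s := B2 K s hs p hpT t ht q hqT
    have hMct : bb s t + p * t - q * s ∈ CT K :=
      sub_mem (add_mem hbbstT (CT_mulV K p hpT t ht)) (CT_mulV K q hqT s hs)
    have e0 : dcomm (s + p) (t + q) (w + r) = (bb s t + p * t - q * s) * w := by
      rw [dcomm_eq, hMeq, bbm K _ hMct w hw r hrT]
    have eL : dcomm (dcomm (s + p) (t + q) (w + r)) (u + p') (v + q')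
        = (bb s t + p * t - q * s) * w * u * v := by
      rw [e0, dcomm_eq, bbm K _ (CT_mulV K _ hMct w hw) u hu p' hp'T,
        bbm K _ (CT_mulV K _ (CT_mulV K _ hMct w hw) u hu) v hv q' hq'T]
    have hM1eq : bb (s + p) (u + p') = bb s u + p * u - p' * s :=
      B2 K s hs p hpT u hu p' hp'T
    have hM1ct : bb s u + p * u - p' * s ∈ CT K :=
      sub_mem (add_mem (Cev_le_CT K (bbV_mem_Cev K s hs u hu)) (CT_mulV K p hpT u hu))
        (CT_mulV K p' hp'T s hs)
    have e1 : dcomm (dcomm (s + p) (u + p') (v + q')) (t + q) (w + r)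
        = (bb s u + p * u - p' * s) * v * t * w := by
      have d1 : dcomm (s + p) (u + p') (v + q') = (bb s u + p * u - p' * s) * v := by
        rw [dcomm_eq, hM1eq, bbm K _ hM1ct v hv q' hq'T]
      rw [d1, dcomm_eq, bbm K _ (CT_mulV K _ hM1ct v hv) t ht q hqT,
        bbm K _ (CT_mulV K _ (CT_mulV K _ hM1ct v hv) t ht) w hw r hrT]
    have hM2eq : bb (t + q) (u + p') = bb t u + q * u - p' * t :=
      B2 K t ht q hqT u hu p' hp'T
    have hM2ct : bb t u + q * u - p' * t ∈ CT K :=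
      sub_mem (add_mem (Cev_le_CT K (bbV_mem_Cev K t ht u hu)) (CT_mulV K q hqT u hu))
        (CT_mulV K p' hp'T t ht)
    have e2 : dcomm (s + p) (dcomm (t + q) (u + p') (v + q')) (w + r)
        = -((bb t u + q * u - p' * t) * v * s * w) := by
      have d2 : dcomm (t + q) (u + p') (v + q') = (bb t u + q * u - p' * t) * v := by
        rw [dcomm_eq, hM2eq, bbm K _ hM2ct v hv q' hq'T]
      have hDv : (bb t u + q * u - p' * t) * v ∈ CT K := CT_mulV K _ hM2ct v hv
      rw [d2, dcomm_eq, bbxq K s hs p hpT _ hDv, bb_neg_left,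
        bbm K _ (CT_mulV K _ hDv s hs) w hw r hrT]
    have hM3eq : bb (w + r) (u + p') = bb w u + r * u - p' * w :=
      B2 K w hw r hrT u hu p' hp'T
    have hM3ct : bb w u + r * u - p' * w ∈ CT K :=
      sub_mem (add_mem (Cev_le_CT K (bbV_mem_Cev K w hw u hu)) (CT_mulV K r hrT u hu))
        (CT_mulV K p' hp'T w hw)
    have e3 : dcomm (s + p) (t + q) (dcomm (w + r) (u + p') (v + q')) = 0 := by
      have d3 : dcomm (w + r) (u + p') (v + q') = (bb w u + r * u - p' * w) * v := by
        rw [dcomm_eq, hM3eq, bbm K _ hM3ct v hv q' hq'T]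
      have hDz : (bb w u + r * u - p' * w) * v ∈ CT K := CT_mulV K _ hM3ct v hv
      rw [dcomm_eq, hMeq, d3, bb, kill K _ (CT_mul_c K _ hMct) _ hDz,
        kill K _ (CT_mul_c K _ hDz) _ hMct, sub_zero]
    rw [eL, e1, e2, e3, add_zero]
    simp only [add_mul, sub_mul]
    have hP : p * t * w * u * v = p * u * v * t * w := perm4 K p hpT t ht w hw u hu v hv
    have hQ : q * s * w * u * v = q * u * v * s * w := perm4 K q hqT s hs w hw u hu v hv
    have hP' : p' * s * v * t * w = p' * t * v * s * w := by
      rw [show p' * s * v * t = p' * t * v * s from perm3 K p' hp'T s hs v hv t ht]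
    have hC : bb s t * w * u * v = bb s u * v * t * w - bb t u * v * s * w := by
      have c1 : bb s t * w * u * v = bb s t * u * v * w := by
        rw [comm2 K _ hbbstT w hw u hu, comm2 K _ (CT_mulV K _ hbbstT u hu) w hw v hv]
      have hJ := Jid K s hs t ht u hu
      rw [Ee] at hJ
      have hus : bb u s * t = -(bb s u * t) := by
        simp only [bb, sub_mul]; abel
      rw [hus] at hJ
      have c2 : bb s t * u = bb s u * t - bb t u * s := by
        rw [← sub_eq_zero]
        rw [show bb s t * u - (bb s u * t - bb t u * s)
            = bb s t * u + bb t u * s + -(bb s u * t) from by abel]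
        exact hJ
      calc bb s t * w * u * v = bb s t * u * v * w := c1
        _ = (bb s u * t - bb t u * s) * v * w := by rw [c2]
        _ = bb s u * t * v * w - bb t u * s * v * w := by rw [sub_mul, sub_mul]
        _ = bb s u * v * t * w - bb t u * v * s * w := by
            rw [comm2 K _ (Cev_le_CT K (bbV_mem_Cev K s hs u hu)) t ht v hv,
              comm2 K _ (Cev_le_CT K (bbV_mem_Cev K t ht u hu)) s hs v hv]
    rw [hP, hQ, hC, hP']
    abel
end
end

section
/- In M₃(K), the two-dimensional subspace T₃ spanned by u := E₁₃ and v := −E₁₂ − E₂₁ is closed under the triple product [x,y,z] := (1/4)[[x,y],z], one has [v,u,u] = 0 and [v,u,v] = −(1/4)u, and (T₃, [·,·,·]) is a commutative automorphic Lie triple system: for all x, y, z, x', y' ∈ T₃, [x,y,z] = −[y,x,z], [x,y,z] + [y,z,x] + [z,x,y] = 0, and [[x,y,z],x',y'] = [[x,x',y'],y,z] + [x,[y,x',y'],z] + [x,y,[z,x',y']]. -/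
noncomputable section

/-- `u := E₁₃` in `M₃(K)`. -/
def uMat (K : Type*) [Field K] : Matrix (Fin 3) (Fin 3) K :=
  Matrix.single 0 2 1

/-- `v := −E₁₂ − E₂₁` in `M₃(K)`. -/
def vMat (K : Type*) [Field K] : Matrix (Fin 3) (Fin 3) K :=
  - Matrix.single 0 1 1 - Matrix.single 1 0 1

/-- The triple product `[x,y,z] := (1/4)[[x,y],z]` on `M₃(K)`. -/
def trip {K : Type*} [Field K] (x y z : Matrix (Fin 3) (Fin 3) K) :
    Matrix (Fin 3) (Fin 3) K :=
  (4 : K)⁻¹ • ((x * y - y * x) * z - z * (x * y - y * x))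

lemma trip_uv {K : Type*} [Field K] (a b c d e f : K) :
    trip (a • uMat K + b • vMat K) (c • uMat K + d • vMat K) (e • uMat K + f • vMat K)
      = ((4 : K)⁻¹ * ((a * d - b * c) * f)) • uMat K := by
  ext i j
  fin_cases i <;> fin_cases j <;>
    simp [trip, uMat, vMat, Matrix.mul_apply, Fin.sum_univ_three,
      Matrix.single, Matrix.smul_apply, Matrix.add_apply, Matrix.sub_apply] <;>
    (first | ring1 | left; ring1 | right; ring1)


lemma trip_uL {K : Type*} [Field K] (s c d e f : K) :
    trip (s • uMat K) (c • uMat K + d • vMat K) (e • uMat K + f • vMat K)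
      = ((4 : K)⁻¹ * ((s * d) * f)) • uMat K := by
  have h := trip_uv (K := K) s 0 c d e f
  simp only [zero_smul, add_zero] at h
  rw [h]; congr 1; ring

lemma trip_uM {K : Type*} [Field K] (a b s e f : K) :
    trip (a • uMat K + b • vMat K) (s • uMat K) (e • uMat K + f • vMat K)
      = ((4 : K)⁻¹ * ((-(b * s)) * f)) • uMat K := by
  have h := trip_uv (K := K) a b s 0 e f
  simp only [zero_smul, add_zero] at h
  rw [h]; congr 1; ring

lemma trip_uR {K : Type*} [Field K] (a b c d s : K) :
    trip (a • uMat K + b • vMat K) (c • uMat K + d • vMat K) (s • uMat K)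
      = (0 : K) • uMat K := by
  have h := trip_uv (K := K) a b c d s 0
  simp only [zero_smul, add_zero] at h
  rw [h]; congr 1; ring

/-- The span `T₃` of `u` and `v` is closed under the triple product
`[x,y,z] = (1/4)[[x,y],z]`, one has `[v,u,u] = 0` and `[v,u,v] = −(1/4)u`, and
`(T₃,[·,·,·])` is a commutative automorphic Lie triple system. -/
theorem stmt_16 (K : Type*) [Field K] [CharZero K] :
    (∀ x ∈ Submodule.span K {uMat K, vMat K}, ∀ y ∈ Submodule.span K {uMat K, vMat K},
      ∀ z ∈ Submodule.span K {uMat K, vMat K},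
        trip x y z ∈ Submodule.span K {uMat K, vMat K}) ∧
    trip (vMat K) (uMat K) (uMat K) = 0 ∧
    trip (vMat K) (uMat K) (vMat K) = - ((4 : K)⁻¹ • uMat K) ∧
    (∀ x ∈ Submodule.span K {uMat K, vMat K}, ∀ y ∈ Submodule.span K {uMat K, vMat K},
      ∀ z ∈ Submodule.span K {uMat K, vMat K}, trip x y z = - trip y x z) ∧
    (∀ x ∈ Submodule.span K {uMat K, vMat K}, ∀ y ∈ Submodule.span K {uMat K, vMat K},
      ∀ z ∈ Submodule.span K {uMat K, vMat K},
        trip x y z + trip y z x + trip z x y = 0) ∧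
    (∀ x ∈ Submodule.span K {uMat K, vMat K}, ∀ y ∈ Submodule.span K {uMat K, vMat K},
      ∀ z ∈ Submodule.span K {uMat K, vMat K}, ∀ x' ∈ Submodule.span K {uMat K, vMat K},
      ∀ y' ∈ Submodule.span K {uMat K, vMat K},
        trip (trip x y z) x' y'
          = trip (trip x x' y') y z + trip x (trip y x' y') z + trip x y (trip z x' y')) := by
  have hu : uMat K ∈ Submodule.span K {uMat K, vMat K} :=
    Submodule.subset_span (by simp)
  have hvu : trip (vMat K) (uMat K) (uMat K) = 0 := by
    have h := trip_uv (K := K) 0 1 1 0 1 0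
    simpa using h
  have hvv : trip (vMat K) (uMat K) (vMat K) = - ((4 : K)⁻¹ • uMat K) := by
    have h := trip_uv (K := K) 0 1 1 0 0 1
    simp only [zero_smul, one_smul, add_zero, zero_add] at h
    rw [h]
    rw [← neg_smul]
    congr 1
    ring
  refine ⟨?_, hvu, hvv, ?_, ?_, ?_⟩
  · intro x hx y hy z hz
    rw [Submodule.mem_span_pair] at hx hy hz
    obtain ⟨a, b, rfl⟩ := hx
    obtain ⟨c, d, rfl⟩ := hy
    obtain ⟨e, f, rfl⟩ := hz
    rw [trip_uv]
    exact Submodule.smul_mem _ _ hu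
  · intro x hx y hy z hz
    rw [Submodule.mem_span_pair] at hx hy hz
    obtain ⟨a, b, rfl⟩ := hx
    obtain ⟨c, d, rfl⟩ := hy
    obtain ⟨e, f, rfl⟩ := hz
    rw [trip_uv, trip_uv, ← neg_smul]
    congr 1
    ring
  · intro x hx y hy z hz
    rw [Submodule.mem_span_pair] at hx hy hz
    obtain ⟨a, b, rfl⟩ := hx
    obtain ⟨c, d, rfl⟩ := hy
    obtain ⟨e, f, rfl⟩ := hz
    rw [trip_uv, trip_uv, trip_uv, ← add_smul, ← add_smul]
    convert zero_smul K (uMat K) using 2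
    ring
  · intro x hx y hy z hz x' hx' y' hy'
    rw [Submodule.mem_span_pair] at hx hy hz hx' hy'
    obtain ⟨a, b, rfl⟩ := hx
    obtain ⟨c, d, rfl⟩ := hy
    obtain ⟨e, f, rfl⟩ := hz
    obtain ⟨g, h, rfl⟩ := hx'
    obtain ⟨i, j, rfl⟩ := hy'
    rw [trip_uv, trip_uv, trip_uv, trip_uv, trip_uL, trip_uL, trip_uM, trip_uR,
      ← add_smul, ← add_smul]
    congr 1
    ring
end
end

section
/- Let ā := −2(u − v) and b̄ := 2(u + v) in M₃(K), with the triple product [x,y,z] := (1/4)[[x,y],z]. For all integers i, j ≥ 1 with i + j odd and i + j ≥ 3, the left-normed iterated bracket [ā, b̄, ā, …, ā, b̄, …, b̄] with i − 1 copies of ā followed by j − 1 copies of b̄ after the initial pair (ā, b̄) equals −4u. -/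
noncomputable section

/-- The left-normed iterated bracket `[x₁,x₂,…,xₙ] = [[…[x₁,x₂,x₃],x₄,x₅],…,x_{n−1},xₙ]`:
`iterBr x [x₂,x₃,…,xₙ]` consumes the remaining arguments two at a time. -/
def iterBr {K : Type*} [Field K] :
    Matrix (Fin 3) (Fin 3) K → List (Matrix (Fin 3) (Fin 3) K) → Matrix (Fin 3) (Fin 3) K
  | x, y :: z :: rest => iterBr (trip x y z) rest
  | x, _ => x

/-- explicit form of `ā` -/
def Am (K : Type*) [Field K] : Matrix (Fin 3) (Fin 3) K := !![0,-2,-2; -2,0,0; 0,0,0]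
/-- explicit form of `b̄` -/
def Bm (K : Type*) [Field K] : Matrix (Fin 3) (Fin 3) K := !![0,-2,2; -2,0,0; 0,0,0]
/-- explicit form of `−4u` -/
def Wm (K : Type*) [Field K] : Matrix (Fin 3) (Fin 3) K := !![0,0,-4; 0,0,0; 0,0,0]

lemma hA (K : Type*) [Field K] : (-2 : K) • (uMat K - vMat K) = Am K := by
  ext i j
  fin_cases i <;> fin_cases j <;>
    simp [uMat, vMat, Am, Matrix.single, Matrix.vecHead, Matrix.vecTail]

lemma hB (K : Type*) [Field K] : (2 : K) • (uMat K + vMat K) = Bm K := by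
  ext i j
  fin_cases i <;> fin_cases j <;>
    simp [uMat, vMat, Bm, Matrix.single, Matrix.vecHead, Matrix.vecTail]

lemma hW (K : Type*) [Field K] : (-4 : K) • uMat K = Wm K := by
  ext i j
  fin_cases i <;> fin_cases j <;>
    simp [uMat, Wm, Matrix.single, Matrix.vecHead, Matrix.vecTail]

lemma tABA (K : Type*) [Field K] [CharZero K] : trip (Am K) (Bm K) (Am K) = Wm K := by
  ext i j
  fin_cases i <;> fin_cases j <;>
    simp [trip, Am, Bm, Wm, Matrix.mul_apply, Fin.sum_univ_three,
      Matrix.vecHead, Matrix.vecTail] <;> norm_num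

lemma tABB (K : Type*) [Field K] [CharZero K] : trip (Am K) (Bm K) (Bm K) = Wm K := by
  ext i j
  fin_cases i <;> fin_cases j <;>
    simp [trip, Am, Bm, Wm, Matrix.mul_apply, Fin.sum_univ_three,
      Matrix.vecHead, Matrix.vecTail] <;> norm_num

lemma tWAA (K : Type*) [Field K] [CharZero K] : trip (Wm K) (Am K) (Am K) = Wm K := by
  ext i j
  fin_cases i <;> fin_cases j <;>
    simp [trip, Am, Wm, Matrix.mul_apply, Fin.sum_univ_three,
      Matrix.vecHead, Matrix.vecTail] <;> norm_num

lemma tWAB (K : Type*) [Field K] [CharZero K] : trip (Wm K) (Am K) (Bm K) = Wm K := by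
  ext i j
  fin_cases i <;> fin_cases j <;>
    simp [trip, Am, Bm, Wm, Matrix.mul_apply, Fin.sum_univ_three,
      Matrix.vecHead, Matrix.vecTail] <;> norm_num

lemma tWBA (K : Type*) [Field K] [CharZero K] : trip (Wm K) (Bm K) (Am K) = Wm K := by
  ext i j
  fin_cases i <;> fin_cases j <;>
    simp [trip, Am, Bm, Wm, Matrix.mul_apply, Fin.sum_univ_three,
      Matrix.vecHead, Matrix.vecTail] <;> norm_num

lemma tWBB (K : Type*) [Field K] [CharZero K] : trip (Wm K) (Bm K) (Bm K) = Wm K := by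
  ext i j
  fin_cases i <;> fin_cases j <;>
    simp [trip, Bm, Wm, Matrix.mul_apply, Fin.sum_univ_three,
      Matrix.vecHead, Matrix.vecTail] <;> norm_num

lemma iterBr_fixed {K : Type*} [Field K] (w : Matrix (Fin 3) (Fin 3) K) :
    ∀ l : List (Matrix (Fin 3) (Fin 3) K),
      (∀ y ∈ l, ∀ z ∈ l, trip w y z = w) → iterBr w l = w
  | [], _ => rfl
  | [_], _ => rfl
  | y :: z :: rest, h => by
      rw [iterBr, h y (by simp) z (by simp)]
      exact iterBr_fixed w rest (fun a ha b hb =>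
        h a (by simp [ha]) b (by simp [hb]))

/-- with `ā := −2(u−v)` and `b̄ := 2(u+v)`, for `i, j ≥ 1` with `i + j` odd
and `i + j ≥ 3`, the left-normed bracket `[ā,b̄,ā,…(i−1)…,ā,b̄,…(j−1)…,b̄]` equals `−4u`. -/
theorem stmt_17 (K : Type*) [Field K] [CharZero K] (i j : ℕ) (hi : 1 ≤ i) (hj : 1 ≤ j)
    (hodd : Odd (i + j)) (hge : 3 ≤ i + j) :
    iterBr ((-2 : K) • (uMat K - vMat K))
        (((2 : K) • (uMat K + vMat K)) ::
          (List.replicate (i - 1) ((-2 : K) • (uMat K - vMat K))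
            ++ List.replicate (j - 1) ((2 : K) • (uMat K + vMat K))))
      = (-4 : K) • uMat K := by
  rw [hA, hB, hW]
  have hmem : ∀ (m n : ℕ) (x : Matrix (Fin 3) (Fin 3) K),
      x ∈ List.replicate m (Am K) ++ List.replicate n (Bm K) → x = Am K ∨ x = Bm K := by
    intro m n x hx
    rcases List.mem_append.1 hx with h | h
    · exact Or.inl (List.eq_of_mem_replicate h)
    · exact Or.inr (List.eq_of_mem_replicate h)
  have hfix : ∀ (m n : ℕ),
      iterBr (Wm K) (List.replicate m (Am K) ++ List.replicate n (Bm K)) = Wm K := by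
    intro m n
    refine iterBr_fixed _ _ (fun y hy z hz => ?_)
    rcases hmem m n y hy with rfl | rfl <;> rcases hmem m n z hz with rfl | rfl
    · exact tWAA K
    · exact tWAB K
    · exact tWBA K
    · exact tWBB K
  rcases Nat.lt_or_ge i 2 with h2 | h2
  · -- i = 1, so j ≥ 2
    have hi1 : i = 1 := le_antisymm (Nat.lt_succ_iff.1 h2) hi
    have hj2 : 2 ≤ j := by omega
    have hj' : j - 1 = (j - 2) + 1 := by omega
    subst hi1
    rw [hj']
    simp only [Nat.sub_self, List.replicate_zero, List.nil_append, List.replicate_succ]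
    rw [iterBr, tABB]
    exact hfix 0 (j - 2)
  · -- i ≥ 2
    have hi' : i - 1 = (i - 2) + 1 := by omega
    rw [hi', List.replicate_succ, List.cons_append, iterBr, tABA]
    exact hfix (i - 2) (j - 1)
end
end
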